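/- arXiv:1010.5808 — 8 statements merged into one kernel-verified Lean document; each statement's English description precedes it below -/
import Mathlib

section
/- Let T* > 0 and K > 0, and let d : [0,T*] × [0,∞) → [0,∞) be a bounded measurable function satisfying d(t,x) ≤ K ∫₀ᵗ ∫₀^{t−s+x} d(s,v) dv ds for all t ∈ [0,T*] and x ≥ 0. Then d(t,x) = 0 for all (t,x) ∈ [0,T*] × [0,∞). -/
open MeasureTheory Set Filter

/-- Let `T* > 0` and `K > 0`, and let `d : [0,T*] × [0,∞) → [0,∞)` be a
bounded measurable function satisfying
`d(t,x) ≤ K ∫₀ᵗ ∫₀^{t−s+x} d(s,v) dv ds` for all `t ∈ [0,T*]` and `x ≥ 0`.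
Then `d(t,x) = 0` for all `(t,x) ∈ [0,T*] × [0,∞)`. -/
theorem gronwall_type_vanishing
    (T K M : ℝ) (hT : 0 < T) (hK : 0 < K) (hM : 0 < M)
    (d : ℝ → ℝ → ℝ) (hmeas : Measurable (Function.uncurry d))
    (hpos : ∀ t ∈ Set.Icc (0:ℝ) T, ∀ x ≥ (0:ℝ), 0 ≤ d t x)
    (hbdd : ∀ t ∈ Set.Icc (0:ℝ) T, ∀ x ≥ (0:ℝ), d t x ≤ M)
    (hineq : ∀ t ∈ Set.Icc (0:ℝ) T, ∀ x ≥ (0:ℝ),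
      d t x ≤ K * ∫ s in (0:ℝ)..t, ∫ v in (0:ℝ)..(t - s + x), d s v) :
    ∀ t ∈ Set.Icc (0:ℝ) T, ∀ x ≥ (0:ℝ), d t x = 0 := by
  have key : ∀ n : ℕ, ∀ t ∈ Set.Icc (0:ℝ) T, ∀ x ≥ (0:ℝ),
      d t x ≤ M * (K * t * (t + x)) ^ n / n.factorial := by
    intro n
    induction n with
    | zero => intro t ht x hx; simpa using hbdd t ht x hx
    | succ n ih =>
      intro t ht x hx
      obtain ⟨ht0, htT⟩ := ht
      have htx : (0:ℝ) ≤ t + x := by linarith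
      set A : ℝ := M * K ^ n * (t + x) ^ (n + 1) / n.factorial with hA
      have hA0 : 0 ≤ A := by positivity
      -- integrability of `d s` on `[0, t-s+x]` for `s ∈ [0,t]`
      have hint : ∀ s ∈ Set.Icc (0:ℝ) t, IntervalIntegrable (d s) volume 0 (t - s + x) := by
        intro s hs
        obtain ⟨hs0, hst⟩ := hs
        have hsT : s ∈ Set.Icc (0:ℝ) T := ⟨hs0, hst.trans htT⟩
        have hc0 : (0:ℝ) ≤ t - s + x := by linarith
        have hdm : Measurable (d s) := hmeas.comp measurable_prodMk_left
        have hIO : IntegrableOn (d s) (Set.Icc 0 (t - s + x)) volume := by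
          apply Measure.integrableOn_of_bounded (M := M) measure_Icc_lt_top.ne
            hdm.aestronglyMeasurable
          rw [ae_restrict_iff' measurableSet_Icc]
          filter_upwards with v hv
          rw [Real.norm_eq_abs, abs_of_nonneg (hpos s hsT v hv.1)]
          exact hbdd s hsT v hv.1
        exact ((Set.uIcc_of_le hc0).symm ▸ hIO).intervalIntegrable
      -- pointwise bound for the inner integral
      have hinner : ∀ s ∈ Set.Icc (0:ℝ) t,
          (∫ v in (0:ℝ)..(t - s + x), d s v) ≤ A * s ^ n := by
        intro s hs
        obtain ⟨hs0, hst⟩ := hs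
        have hsT : s ∈ Set.Icc (0:ℝ) T := ⟨hs0, hst.trans htT⟩
        have hc0 : (0:ℝ) ≤ t - s + x := by linarith
        set B : ℝ := M * (K * s * (t + x)) ^ n / n.factorial with hB
        have hB0 : 0 ≤ B := by positivity
        have h1 : (∫ v in (0:ℝ)..(t - s + x), d s v)
            ≤ ∫ _v in (0:ℝ)..(t - s + x), B := by
          apply intervalIntegral.integral_mono_on hc0 (hint s ⟨hs0, hst⟩)
            intervalIntegrable_const
          intro v hv
          calc d s v ≤ M * (K * s * (s + v)) ^ n / n.factorial := ih s hsT v hv.1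
            _ ≤ B := by
                rw [hB]
                have hsv : s + v ≤ t + x := by linarith [hv.2]
                have hbase : K * s * (s + v) ≤ K * s * (t + x) :=
                  mul_le_mul_of_nonneg_left hsv (by positivity)
                have hpow : (K * s * (s + v)) ^ n ≤ (K * s * (t + x)) ^ n :=
                  pow_le_pow_left₀ (mul_nonneg (by positivity) (by linarith [hv.1])) hbase n
                gcongr M * ?_ / _
        have h2 : (∫ _v in (0:ℝ)..(t - s + x), B) = (t - s + x) * B := by
          rw [intervalIntegral.integral_const, sub_zero, smul_eq_mul]
        have h3 : (t - s + x) * B ≤ (t + x) * B := by nlinarith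
        have h4 : (t + x) * B = A * s ^ n := by rw [hA, hB, mul_pow, mul_pow]; ring
        linarith
      -- a measurable version of the inner integral
      set S : Set (ℝ × ℝ) := {p : ℝ × ℝ | 0 < p.2 ∧ p.2 ≤ t - p.1 + x} with hS
      have hSm : MeasurableSet S :=
        (measurableSet_lt measurable_const measurable_snd).inter
          (measurableSet_le measurable_snd (by fun_prop))
      set F : ℝ × ℝ → ℝ := Set.indicator S (Function.uncurry d) with hF
      have hFm : StronglyMeasurable F := (hmeas.indicator hSm).stronglyMeasurable
      set g : ℝ → ℝ := fun s => ∫ v, F (s, v) with hg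
      have hgm : StronglyMeasurable g := hFm.integral_prod_right'
      have heq : ∀ s ∈ Set.Icc (0:ℝ) t, g s = ∫ v in (0:ℝ)..(t - s + x), d s v := by
        intro s hs
        have hc0 : (0:ℝ) ≤ t - s + x := by
          obtain ⟨hs0, hst⟩ := hs; linarith
        have hfun : ∀ v, F (s, v) = Set.indicator (Set.Ioc 0 (t - s + x)) (d s) v := by
          intro v
          simp only [hF, hS, Set.indicator, Set.mem_Ioc, Set.mem_setOf_eq, Function.uncurry]
        rw [hg]
        simp only [hfun]
        rw [intervalIntegral.integral_of_le hc0,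
          ← MeasureTheory.integral_indicator measurableSet_Ioc]
      -- integrability of g on [0,t]
      have hgnn : ∀ s ∈ Set.Icc (0:ℝ) t, 0 ≤ g s := by
        intro s hs
        rw [heq s hs]
        obtain ⟨hs0, hst⟩ := hs
        have hsT : s ∈ Set.Icc (0:ℝ) T := ⟨hs0, hst.trans htT⟩
        apply intervalIntegral.integral_nonneg (by linarith)
        intro v hv
        exact hpos s hsT v hv.1
      have hgint : IntervalIntegrable g volume 0 t := by
        have hIO : IntegrableOn g (Set.Icc 0 t) volume := by
          apply Measure.integrableOn_of_bounded (M := A * t ^ n) measure_Icc_lt_top.ne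
            hgm.aestronglyMeasurable
          rw [ae_restrict_iff' measurableSet_Icc]
          filter_upwards with s hs
          rw [Real.norm_eq_abs, abs_of_nonneg (hgnn s hs)]
          calc g s ≤ A * s ^ n := (heq s hs) ▸ hinner s hs
            _ ≤ A * t ^ n := by
                apply mul_le_mul_of_nonneg_left _ hA0
                exact pow_le_pow_left₀ hs.1 hs.2 n
        exact ((Set.uIcc_of_le ht0).symm ▸ hIO).intervalIntegrable
      -- compare outer integrals
      have houter : (∫ s in (0:ℝ)..t, ∫ v in (0:ℝ)..(t - s + x), d s v)
          ≤ ∫ s in (0:ℝ)..t, A * s ^ n := by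
        have hcongr : (∫ s in (0:ℝ)..t, ∫ v in (0:ℝ)..(t - s + x), d s v)
            = ∫ s in (0:ℝ)..t, g s := by
          apply intervalIntegral.integral_congr
          intro s hs
          rw [Set.uIcc_of_le ht0] at hs
          exact (heq s hs).symm
        rw [hcongr]
        apply intervalIntegral.integral_mono_on ht0 hgint
          ((continuous_const.mul (continuous_pow n)).intervalIntegrable 0 t)
        intro s hs
        exact (heq s hs) ▸ hinner s hs
      have hval : (∫ s in (0:ℝ)..t, A * s ^ n) = A * (t ^ (n + 1) / (n + 1)) := by
        rw [intervalIntegral.integral_const_mul, integral_pow]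
        norm_num
      have hfact : ((n + 1).factorial : ℝ) = (n + 1) * n.factorial := by
        rw [Nat.factorial_succ]; push_cast; ring
      have hn0 : (n.factorial : ℝ) ≠ 0 := Nat.cast_ne_zero.2 n.factorial_ne_zero
      have hn1 : (0:ℝ) < (n:ℝ) + 1 := by positivity
      calc d t x ≤ K * ∫ s in (0:ℝ)..t, ∫ v in (0:ℝ)..(t - s + x), d s v :=
            hineq t ⟨ht0, htT⟩ x hx
        _ ≤ K * ∫ s in (0:ℝ)..t, A * s ^ n := by
            apply mul_le_mul_of_nonneg_left houter hK.le
        _ = M * (K * t * (t + x)) ^ (n + 1) / (n + 1).factorial := by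
            rw [hval, hA, hfact, mul_pow, mul_pow]
            field_simp
            ring
  intro t ht x hx
  have hlim : Tendsto (fun n : ℕ => M * (K * t * (t + x)) ^ n / n.factorial)
      atTop (nhds 0) := by
    have := (FloorSemiring.tendsto_pow_div_factorial_atTop (K * t * (t + x))).const_mul M
    simpa [mul_div_assoc] using this
  have hle : d t x ≤ 0 :=
    ge_of_tendsto' hlim fun n => key n t ht x hx
  exact le_antisymm hle (hpos t ht x hx)
end

section
/- Let T* > 0, K > 0, M > 0, and let d̄ be a measurable function on the set {(u,w) : u ∈ [0,T*], w ≥ u} with values in [0,M] that satisfies d̄(u,w) ≤ K ∫₀ᵘ ∫ₛʷ d̄(s,z) dz ds for all (u,w) in this set. Then for every natural number n and all (u,w) in the set, d̄(u,w) ≤ M Kⁿ (u·w)ⁿ / (n!)². -/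
open MeasureTheory Set Filter

/-- Let `T* > 0`, `K > 0`, `M > 0`, and let `d̄` be a measurable function
on `{(u,w) : u ∈ [0,T*], w ≥ u}` with values in `[0,M]` satisfying
`d̄(u,w) ≤ K ∫₀ᵘ ∫ₛʷ d̄(s,z) dz ds` on this set. Then for every `n` and all `(u,w)` in the
set, `d̄(u,w) ≤ M Kⁿ (u·w)ⁿ / (n!)²`. -/
theorem gronwall_type_iteration_bound
    (T K M : ℝ) (hT : 0 < T) (hK : 0 < K) (hM : 0 < M)
    (dbar : ℝ → ℝ → ℝ) (hmeas : Measurable (Function.uncurry dbar))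
    (hrange : ∀ u ∈ Set.Icc (0:ℝ) T, ∀ w ≥ u, 0 ≤ dbar u w ∧ dbar u w ≤ M)
    (hineq : ∀ u ∈ Set.Icc (0:ℝ) T, ∀ w ≥ u,
      dbar u w ≤ K * ∫ s in (0:ℝ)..u, ∫ z in s..w, dbar s z) :
    ∀ n : ℕ, ∀ u ∈ Set.Icc (0:ℝ) T, ∀ w ≥ u,
      dbar u w ≤ M * K ^ n * (u * w) ^ n / ((Nat.factorial n : ℝ)) ^ 2 := by
  intro n
  induction n with
  | zero =>
    intro u hu w hw
    simpa using (hrange u hu w hw).2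
  | succ n ih =>
    intro u hu w hw
    obtain ⟨hu0, huT⟩ := hu
    have hw0 : (0:ℝ) ≤ w := le_trans hu0 hw
    set C : ℝ := M * K ^ n / (Nat.factorial n : ℝ) ^ 2 with hCdef
    have hfac : (0:ℝ) < (Nat.factorial n : ℝ) := by
      exact_mod_cast Nat.factorial_pos n
    have hC0 : 0 ≤ C := by positivity
    have hmeas_s : ∀ s : ℝ, Measurable (dbar s) := fun s =>
      hmeas.comp measurable_prodMk_left
    -- inner integrability
    have hInner_int : ∀ s ∈ Set.Icc (0:ℝ) u, IntervalIntegrable (dbar s) volume s w := by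
      intro s hs
      have hsT : s ∈ Set.Icc (0:ℝ) T := ⟨hs.1, hs.2.trans huT⟩
      have hsw : s ≤ w := le_trans hs.2 hw
      refine (intervalIntegrable_const (c := M)).mono_fun'
        ((hmeas_s s).aestronglyMeasurable) ?_
      rw [uIoc_of_le hsw]
      filter_upwards [ae_restrict_mem measurableSet_Ioc] with z hz
      have h := hrange s hsT z (le_of_lt hz.1)
      rw [Real.norm_eq_abs, abs_of_nonneg h.1]
      exact h.2
    -- inner nonnegativity
    have hInner_nonneg : ∀ s ∈ Set.Icc (0:ℝ) u, 0 ≤ ∫ z in s..w, dbar s z := by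
      intro s hs
      have hsT : s ∈ Set.Icc (0:ℝ) T := ⟨hs.1, hs.2.trans huT⟩
      have hsw : s ≤ w := le_trans hs.2 hw
      refine intervalIntegral.integral_nonneg hsw ?_
      intro z hz
      exact (hrange s hsT z hz.1).1
    -- inner bound
    have hInner_bound : ∀ s ∈ Set.Icc (0:ℝ) u,
        (∫ z in s..w, dbar s z) ≤ C * w ^ (n+1) / (n+1) * s ^ n := by
      intro s hs
      have hsT : s ∈ Set.Icc (0:ℝ) T := ⟨hs.1, hs.2.trans huT⟩
      have hsw : s ≤ w := le_trans hs.2 hw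
      have hpoly : IntervalIntegrable (fun z : ℝ => C * s ^ n * z ^ n) volume s w :=
        ((continuous_const.mul (continuous_pow n)).intervalIntegrable s w)
      have h1 : (∫ z in s..w, dbar s z) ≤ ∫ z in s..w, C * s ^ n * z ^ n := by
        refine intervalIntegral.integral_mono_on hsw (hInner_int s hs) hpoly ?_
        intro z hz
        have hIH := ih s hsT z hz.1
        calc dbar s z ≤ M * K ^ n * (s * z) ^ n / (Nat.factorial n : ℝ) ^ 2 := hIH
          _ = C * s ^ n * z ^ n := by rw [hCdef]; ring
      have h2 : (∫ z in s..w, C * s ^ n * z ^ n)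
          = C * s ^ n * ((w ^ (n+1) - s ^ (n+1)) / ((n:ℝ)+1)) := by
        rw [intervalIntegral.integral_const_mul]
        rw [integral_pow]
      have h3 : C * s ^ n * ((w ^ (n+1) - s ^ (n+1)) / ((n:ℝ)+1))
          ≤ C * w ^ (n+1) / ((n:ℝ)+1) * s ^ n := by
        have hs0 : (0:ℝ) ≤ s := hs.1
        have hsn : (0:ℝ) ≤ s ^ (n+1) := by positivity
        have hn1 : (0:ℝ) < (n:ℝ) + 1 := by positivity
        have hb : (w ^ (n+1) - s ^ (n+1)) / ((n:ℝ)+1) ≤ w ^ (n+1) / ((n:ℝ)+1) := by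
          gcongr
          linarith
        calc C * s ^ n * ((w ^ (n+1) - s ^ (n+1)) / ((n:ℝ)+1))
            ≤ C * s ^ n * (w ^ (n+1) / ((n:ℝ)+1)) :=
              mul_le_mul_of_nonneg_left hb (by positivity)
          _ = C * w ^ (n+1) / ((n:ℝ)+1) * s ^ n := by ring
      calc (∫ z in s..w, dbar s z) ≤ ∫ z in s..w, C * s ^ n * z ^ n := h1
        _ = C * s ^ n * ((w ^ (n+1) - s ^ (n+1)) / ((n:ℝ)+1)) := h2
        _ ≤ C * w ^ (n+1) / ((n:ℝ)+1) * s ^ n := h3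
    -- outer integral bound
    have hmain := hineq u ⟨hu0, huT⟩ w hw
    set D : ℝ := C * w ^ (n+1) / ((n:ℝ)+1) with hDdef
    have hD0 : 0 ≤ D := by positivity
    have houter : (∫ s in (0:ℝ)..u, ∫ z in s..w, dbar s z)
        ≤ ∫ s in (0:ℝ)..u, D * s ^ n := by
      rw [intervalIntegral.integral_of_le hu0, intervalIntegral.integral_of_le hu0]
      refine integral_mono_of_nonneg ?_ ?_ ?_
      · filter_upwards [ae_restrict_mem measurableSet_Ioc] with s hs
        exact hInner_nonneg s ⟨le_of_lt hs.1, hs.2⟩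
      · exact (continuous_const.mul (continuous_pow n)).integrableOn_Ioc
      · filter_upwards [ae_restrict_mem measurableSet_Ioc] with s hs
        exact hInner_bound s ⟨le_of_lt hs.1, hs.2⟩
    have hcomp : (∫ s in (0:ℝ)..u, D * s ^ n) = D * (u ^ (n+1) / ((n:ℝ)+1)) := by
      rw [intervalIntegral.integral_const_mul]
      rw [integral_pow]
      norm_num
    have hfinal : K * (D * (u ^ (n+1) / ((n:ℝ)+1)))
        = M * K ^ (n+1) * (u * w) ^ (n+1) / ((Nat.factorial (n+1) : ℝ)) ^ 2 := by
      rw [hDdef, hCdef, Nat.factorial_succ]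
      have hn1 : ((n:ℝ)+1) ≠ 0 := by positivity
      push_cast
      field_simp
      ring
    calc dbar u w ≤ K * ∫ s in (0:ℝ)..u, ∫ z in s..w, dbar s z := hmain
      _ ≤ K * ∫ s in (0:ℝ)..u, D * s ^ n := mul_le_mul_of_nonneg_left houter hK.le
      _ = M * K ^ (n+1) * (u * w) ^ (n+1) / ((Nat.factorial (n+1) : ℝ)) ^ 2 := by
          rw [hcomp]; exact hfinal
end

section
/- Let T* > 0, γ > 0, λ̲, λ̄, b̄ > 0 and let λ̃ : [0,T*] × [0,∞) → ℝ be measurable with λ̲ ≤ λ̃(t,x) ≤ λ̄, let b̃ : [0,T*] × [0,∞) → [0,∞) be measurable with b̃ ≤ b̄, let r₀ : [0,∞) → [0,∞) be measurable with r₀* := sup_{x≥0} r₀(x) < ∞, and let J′ : [0,∞) → ℝ be nondecreasing and Lipschitz continuous on [0,∞). If r₁, r₂ ∈ 𝕃^{2,γ}_+ both satisfy the operator equation r = 𝒦r on [0,T*] × [0,∞), then r₁(t,x) = r₂(t,x) for all t ∈ [0,T*] and x ≥ 0. -/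
open MeasureTheory Set Filter

/-- The weighted `L²` norm `‖f‖_{L^{2,γ}} = (∫₀^∞ f(x)² e^{γx} dx)^{1/2}`. -/
noncomputable def L2wNorm (γ : ℝ) (f : ℝ → ℝ) : ℝ :=
  Real.sqrt (∫ x in Set.Ioi (0:ℝ), (f x) ^ 2 * Real.exp (γ * x))

/-- Membership in `𝕃^{2,γ}_+`: nonnegative, jointly measurable, with
`sup_{t ∈ [0,T*]} ‖h(t,·)‖_{L^{2,γ}} < ∞`. -/
def MemLL2 (T γ : ℝ) (h : ℝ → ℝ → ℝ) : Prop :=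
  (∀ t x, 0 ≤ h t x) ∧ Measurable (Function.uncurry h) ∧
    (∀ t ∈ Set.Icc (0:ℝ) T, MeasureTheory.IntegrableOn
      (fun x => (h t x) ^ 2 * Real.exp (γ * x)) (Set.Ioi 0)) ∧
    BddAbove ((fun t => L2wNorm γ (h t)) '' Set.Icc 0 T)

/-- The norm `‖h‖_{𝕃^{2,γ}} = sup_{t ∈ [0,T*]} ‖h(t,·)‖_{L^{2,γ}}`. -/
noncomputable def LL2Norm (T γ : ℝ) (h : ℝ → ℝ → ℝ) : ℝ :=
  sSup ((fun t => L2wNorm γ (h t)) '' Set.Icc 0 T)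

/-- The HJMM fixed-point operator `𝒦`:
`(𝒦h)(t,x) = r₀(t+x) b̃(t,x) exp(∫₀ᵗ J′(∫₀^{t−s+x} λ̃(s,v) h(s,v) dv) λ̃(s,t−s+x) ds)`. -/
noncomputable def Kop (r₀ : ℝ → ℝ) (b lam : ℝ → ℝ → ℝ) (J' : ℝ → ℝ)
    (h : ℝ → ℝ → ℝ) : ℝ → ℝ → ℝ := fun t x =>
  r₀ (t + x) * b t x *
    Real.exp (∫ s in (0:ℝ)..t,
      J' (∫ v in (0:ℝ)..(t - s + x), lam s v * h s v) * lam s (t - s + x))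

lemma abs_exp_sub_exp_le (a b : ℝ) :
    |Real.exp a - Real.exp b| ≤ (Real.exp a + Real.exp b) * |a - b| := by
  wlog h : b ≤ a generalizing a b
  · rw [abs_sub_comm, abs_sub_comm a b, add_comm]
    exact this b a (le_of_not_ge h)
  rw [abs_of_nonneg (sub_nonneg.2 (Real.exp_le_exp.2 h)), abs_of_nonneg (sub_nonneg.2 h)]
  have h1 : b - a + 1 ≤ Real.exp (b - a) := Real.add_one_le_exp _
  have h2 : Real.exp (b - a) * Real.exp a = Real.exp b := by
    rw [← Real.exp_add]; ring_nf
  have h3 := Real.exp_pos a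
  have h4 := Real.exp_pos b
  nlinarith

lemma integral_exp_neg_mul_Ioi_zero {γ : ℝ} (hγ : 0 < γ) :
    ∫ x in Set.Ioi (0:ℝ), Real.exp (-γ * x) = 1 / γ := by
  have hderiv : ∀ x ∈ Set.Ioi (0:ℝ),
      HasDerivAt (fun y => -Real.exp (-γ * y) / γ) (Real.exp (-γ * x)) x := by
    intro x _
    have h1 : HasDerivAt (fun y : ℝ => -γ * y) (-γ) x := by
      simpa using (hasDerivAt_id x).const_mul (-γ)
    have h2 := (h1.exp).neg.div_const γ
    exact h2.congr_deriv (by rw [mul_neg, neg_neg, mul_div_assoc, div_self hγ.ne', mul_one])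
  have hexp : Tendsto (fun y : ℝ => Real.exp (-γ * y)) atTop (nhds 0) := by
    have h0 : Tendsto (fun y : ℝ => -γ * y) atTop atBot := by
      have := (tendsto_id (α := ℝ) (x := atTop)).const_mul_atTop hγ
      simpa [neg_mul] using tendsto_neg_atBot_iff.mpr this
    exact Real.tendsto_exp_atBot.comp h0
  have htend : Tendsto (fun y => -Real.exp (-γ * y) / γ) atTop (nhds 0) := by
    simpa using (hexp.neg).div_const γ
  have hcont : ContinuousWithinAt (fun y => -Real.exp (-γ * y) / γ) (Set.Ici (0:ℝ)) 0 := by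
    exact (((Real.continuous_exp.comp (continuous_const.mul continuous_id)).neg).div_const γ).continuousWithinAt
  have hint : IntegrableOn (fun x => Real.exp (-γ * x)) (Set.Ioi (0:ℝ)) :=
    exp_neg_integrableOn_Ioi 0 hγ
  have := MeasureTheory.integral_Ioi_of_hasDerivAt_of_tendsto hcont hderiv hint htend
  rw [this]
  simp [Real.exp_zero]
  field_simp

lemma weightedCS {γ : ℝ} (hγ : 0 < γ) {h : ℝ → ℝ} (hm : Measurable h) (hnn : ∀ x, 0 ≤ h x)
    (hi : IntegrableOn (fun x => h x ^ 2 * Real.exp (γ * x)) (Set.Ioi 0)) :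
    IntegrableOn h (Set.Ioi 0) ∧
      ∫ x in Set.Ioi (0:ℝ), h x ≤
        Real.sqrt (∫ x in Set.Ioi (0:ℝ), h x ^ 2 * Real.exp (γ * x)) / Real.sqrt γ := by
  set μ := volume.restrict (Set.Ioi (0:ℝ)) with hμ
  set f : ℝ → ℝ := fun x => h x * Real.exp (γ / 2 * x) with hf
  set g : ℝ → ℝ := fun x => Real.exp (-(γ / 2) * x) with hg
  have hfg : ∀ x, h x = f x * g x := by
    intro x
    simp only [hf, hg, mul_assoc, ← Real.exp_add]
    ring_nf
    simp
  have hexpsq : ∀ x, Real.exp (γ / 2 * x) ^ 2 = Real.exp (γ * x) := by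
    intro x; rw [sq, ← Real.exp_add]; congr 1; ring
  have hfsq : (fun x => f x ^ 2) = fun x => h x ^ 2 * Real.exp (γ * x) := by
    funext x; simp only [hf]; rw [mul_pow, hexpsq]
  have hgsq : (fun x => g x ^ 2) = fun x => Real.exp (-γ * x) := by
    funext x; simp only [hg]; rw [sq, ← Real.exp_add]; congr 1; ring
  have hfmeas : Measurable f := hm.mul (by fun_prop)
  have hgmeas : Measurable g := by fun_prop
  have hfmem : MemLp f 2 μ := by
    rw [memLp_two_iff_integrable_sq (hfmeas.aestronglyMeasurable)]
    rw [hfsq]; exact hi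
  have hgmem : MemLp g 2 μ := by
    rw [memLp_two_iff_integrable_sq (hgmeas.aestronglyMeasurable)]
    rw [hgsq]; exact exp_neg_integrableOn_Ioi 0 (by linarith)
  have hint : Integrable (fun x => f x * g x) μ := by
    have := hgmem.smul (r := 1) hfmem
    rw [memLp_one_iff_integrable] at this
    refine this.congr (Eventually.of_forall fun x => ?_)
    simp [smul_eq_mul, mul_comm]
  have hIh : IntegrableOn h (Set.Ioi 0) := by
    refine (integrable_congr ?_).mp hint
    exact Eventually.of_forall fun x => (hfg x).symm
  refine ⟨hIh, ?_⟩
  have h22 : Real.HolderConjugate 2 2 := Real.HolderConjugate.two_two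
  have hcs := integral_mul_le_Lp_mul_Lq_of_nonneg (μ := μ) h22
    (Eventually.of_forall fun x => mul_nonneg (hnn x) (Real.exp_pos _).le)
    (Eventually.of_forall fun x => (Real.exp_pos _).le)
    (by simpa using hfmem) (by simpa using hgmem)
  have hrw : ∀ (u : ℝ → ℝ), (fun a => u a ^ (2:ℝ)) = fun a => u a ^ 2 := by
    intro u; funext a
    rw [show (2:ℝ) = ((2:ℕ):ℝ) by norm_num, Real.rpow_natCast]
  rw [hrw f, hrw g] at hcs
  calc ∫ x in Set.Ioi (0:ℝ), h x = ∫ a, f a * g a ∂μ := by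
        refine setIntegral_congr_fun measurableSet_Ioi fun x _ => hfg x
    _ ≤ (∫ a, f a ^ 2 ∂μ) ^ (1/(2:ℝ)) * (∫ a, g a ^ 2 ∂μ) ^ (1/(2:ℝ)) := hcs
    _ = Real.sqrt (∫ x in Set.Ioi (0:ℝ), h x ^ 2 * Real.exp (γ * x)) / Real.sqrt γ := by
        rw [← Real.sqrt_eq_rpow, ← Real.sqrt_eq_rpow, hfsq, hgsq,
          integral_exp_neg_mul_Ioi_zero hγ, one_div, Real.sqrt_inv, div_eq_mul_inv]
set_option maxHeartbeats 2000000 in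
/-- (Uniqueness) If `r₀` is bounded and `J′` is nondecreasing and
Lipschitz on `[0,∞)`, then any two solutions in `𝕃^{2,γ}_+` of the operator equation
`r = 𝒦r` coincide on `[0,T*] × [0,∞)`. -/
theorem Kop_fixed_point_unique
    (T γ lamLo lamHi bBar : ℝ) (hT : 0 < T) (hγ : 0 < γ)
    (hlamLo : 0 < lamLo) (hlamHi : 0 < lamHi) (hbBar : 0 < bBar)
    (lam : ℝ → ℝ → ℝ) (hlamMeas : Measurable (Function.uncurry lam))
    (hlam : ∀ t ∈ Set.Icc (0:ℝ) T, ∀ x ≥ (0:ℝ),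
      lamLo ≤ lam t x ∧ lam t x ≤ lamHi)
    (b : ℝ → ℝ → ℝ) (hbMeas : Measurable (Function.uncurry b))
    (hb : ∀ t ∈ Set.Icc (0:ℝ) T, ∀ x ≥ (0:ℝ), 0 ≤ b t x ∧ b t x ≤ bBar)
    (r₀ : ℝ → ℝ) (hr₀Meas : Measurable r₀) (hr₀pos : ∀ x ≥ (0:ℝ), 0 ≤ r₀ x)
    (hr₀bdd : BddAbove (r₀ '' Set.Ici 0))
    (J' : ℝ → ℝ) (hJmono : MonotoneOn J' (Set.Ici 0))
    (hJlip : ∃ L : NNReal, LipschitzOnWith L J' (Set.Ici 0))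
    (r₁ r₂ : ℝ → ℝ → ℝ) (hr₁ : MemLL2 T γ r₁) (hr₂ : MemLL2 T γ r₂)
    (hfix₁ : ∀ t ∈ Set.Icc (0:ℝ) T, ∀ x ≥ (0:ℝ),
      r₁ t x = Kop r₀ b lam J' r₁ t x)
    (hfix₂ : ∀ t ∈ Set.Icc (0:ℝ) T, ∀ x ≥ (0:ℝ),
      r₂ t x = Kop r₀ b lam J' r₂ t x) :
    ∀ t ∈ Set.Icc (0:ℝ) T, ∀ x ≥ (0:ℝ), r₁ t x = r₂ t x := by
  classical
  obtain ⟨L, hL⟩ := hJlip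
  obtain ⟨hr₁nn, hr₁meas, hr₁int, hr₁bdd⟩ := hr₁
  obtain ⟨hr₂nn, hr₂meas, hr₂int, hr₂bdd⟩ := hr₂
  obtain ⟨K₁, hK₁⟩ := hr₁bdd
  obtain ⟨K₂, hK₂⟩ := hr₂bdd
  set K : ℝ := max K₁ K₂ with hKdef
  have hK₁' : ∀ t ∈ Set.Icc (0:ℝ) T, L2wNorm γ (r₁ t) ≤ K := fun t ht =>
    le_trans (hK₁ (Set.mem_image_of_mem _ ht)) (le_max_left _ _)
  have hK₂' : ∀ t ∈ Set.Icc (0:ℝ) T, L2wNorm γ (r₂ t) ≤ K := fun t ht =>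
    le_trans (hK₂ (Set.mem_image_of_mem _ ht)) (le_max_right _ _)
  have hT0 : (0:ℝ) ∈ Set.Icc (0:ℝ) T := ⟨le_refl _, hT.le⟩
  have hKnn : 0 ≤ K := le_trans (Real.sqrt_nonneg _) (hK₁' 0 hT0)
  have hsγ : 0 < Real.sqrt γ := Real.sqrt_pos.2 hγ
  -- the Lipschitz extension of J'
  set Jm : ℝ → ℝ := fun y => J' (max y 0) with hJmdef
  have hJmLip : LipschitzWith L Jm := by
    refine LipschitzWith.of_dist_le_mul fun a b => ?_
    have h1 := hL.dist_le_mul (max a 0) (le_max_right a 0) (max b 0) (le_max_right b 0)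
    refine le_trans h1 (mul_le_mul_of_nonneg_left ?_ L.coe_nonneg)
    rw [Real.dist_eq, Real.dist_eq]
    exact abs_max_sub_max_le_abs a b 0
  have hJm0 : Jm 0 = J' 0 := by simp [hJmdef]
  -- the L² distance function
  set φ : ℝ → ℝ := fun t =>
    Real.sqrt (∫ x in Set.Ioi (0:ℝ), (r₁ t x - r₂ t x)^2 * Real.exp (γ * x)) with hφdef
  have hφnn : ∀ t, 0 ≤ φ t := fun t => Real.sqrt_nonneg _
  have hmr₁ : ∀ t, Measurable (r₁ t) := fun t => hr₁meas.of_uncurry_left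
  have hmr₂ : ∀ t, Measurable (r₂ t) := fun t => hr₂meas.of_uncurry_left
  -- integrability of the weighted squares of the difference and of the sum
  have hΔsq_int : ∀ t ∈ Set.Icc (0:ℝ) T,
      IntegrableOn (fun x => (r₁ t x - r₂ t x)^2 * Real.exp (γ*x)) (Set.Ioi 0) := by
    intro t ht
    have h2 := ((hr₁int t ht).const_mul 2).add ((hr₂int t ht).const_mul 2)
    refine Integrable.mono' h2 ?_ ?_
    · exact ((((hmr₁ t).sub (hmr₂ t)).pow_const 2).mul (by fun_prop)).aestronglyMeasurable
    · refine Eventually.of_forall fun x => ?_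
      have he := (Real.exp_pos (γ*x)).le
      rw [Real.norm_eq_abs, abs_of_nonneg (by positivity)]
      simp only [Pi.add_apply]
      nlinarith [sq_nonneg (r₁ t x + r₂ t x), mul_nonneg (sq_nonneg (r₁ t x + r₂ t x)) he]
  have hSsq_int : ∀ t ∈ Set.Icc (0:ℝ) T,
      IntegrableOn (fun x => (r₁ t x + r₂ t x)^2 * Real.exp (γ*x)) (Set.Ioi 0) := by
    intro t ht
    have h2 := ((hr₁int t ht).const_mul 2).add ((hr₂int t ht).const_mul 2)
    refine Integrable.mono' h2 ?_ ?_
    · exact ((((hmr₁ t).add (hmr₂ t)).pow_const 2).mul (by fun_prop)).aestronglyMeasurable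
    · refine Eventually.of_forall fun x => ?_
      have he := (Real.exp_pos (γ*x)).le
      rw [Real.norm_eq_abs, abs_of_nonneg (by positivity)]
      simp only [Pi.add_apply]
      nlinarith [sq_nonneg (r₁ t x - r₂ t x), mul_nonneg (sq_nonneg (r₁ t x - r₂ t x)) he]
  -- the weighted square integrals are bounded by K²
  have hsq_le : ∀ t ∈ Set.Icc (0:ℝ) T,
      (∫ x in Set.Ioi (0:ℝ), r₁ t x ^2 * Real.exp (γ*x)) ≤ K^2 ∧
      (∫ x in Set.Ioi (0:ℝ), r₂ t x ^2 * Real.exp (γ*x)) ≤ K^2 := by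
    intro t ht
    constructor
    · have hnn : 0 ≤ ∫ x in Set.Ioi (0:ℝ), r₁ t x ^2 * Real.exp (γ*x) :=
        setIntegral_nonneg measurableSet_Ioi fun x _ => by positivity
      have hh : Real.sqrt (∫ x in Set.Ioi (0:ℝ), r₁ t x ^2 * Real.exp (γ*x)) ≤ K := hK₁' t ht
      nlinarith [Real.sq_sqrt hnn, Real.sqrt_nonneg (∫ x in Set.Ioi (0:ℝ), r₁ t x ^2 * Real.exp (γ*x))]
    · have hnn : 0 ≤ ∫ x in Set.Ioi (0:ℝ), r₂ t x ^2 * Real.exp (γ*x) :=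
        setIntegral_nonneg measurableSet_Ioi fun x _ => by positivity
      have hh : Real.sqrt (∫ x in Set.Ioi (0:ℝ), r₂ t x ^2 * Real.exp (γ*x)) ≤ K := hK₂' t ht
      nlinarith [Real.sq_sqrt hnn, Real.sqrt_nonneg (∫ x in Set.Ioi (0:ℝ), r₂ t x ^2 * Real.exp (γ*x))]
  -- a priori bound for φ
  have hφle : ∀ t ∈ Set.Icc (0:ℝ) T, φ t ≤ 2*K := by
    intro t ht
    have h2 := ((hr₁int t ht).const_mul 2).add ((hr₂int t ht).const_mul 2)
    have h1 : (∫ x in Set.Ioi (0:ℝ), (r₁ t x - r₂ t x)^2 * Real.exp (γ*x)) ≤ 2*K^2 + 2*K^2 := by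
      calc (∫ x in Set.Ioi (0:ℝ), (r₁ t x - r₂ t x)^2 * Real.exp (γ*x))
          ≤ ∫ x in Set.Ioi (0:ℝ),
              (2*(r₁ t x ^2 * Real.exp (γ*x)) + 2*(r₂ t x ^2 * Real.exp (γ*x))) := by
            refine setIntegral_mono_on (hΔsq_int t ht) h2 measurableSet_Ioi fun x _ => ?_
            have he := (Real.exp_pos (γ*x)).le
            nlinarith [mul_nonneg (sq_nonneg (r₁ t x + r₂ t x)) he]
        _ = 2*(∫ x in Set.Ioi (0:ℝ), r₁ t x ^2 * Real.exp (γ*x))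
            + 2*(∫ x in Set.Ioi (0:ℝ), r₂ t x ^2 * Real.exp (γ*x)) := by
            rw [integral_add ((hr₁int t ht).const_mul 2) ((hr₂int t ht).const_mul 2),
              integral_const_mul, integral_const_mul]
        _ ≤ 2*K^2 + 2*K^2 := by
            have := hsq_le t ht
            linarith [this.1, this.2]
    calc φ t ≤ Real.sqrt (2*K^2 + 2*K^2) := Real.sqrt_le_sqrt h1
      _ = 2*K := by
          rw [show 2*K^2+2*K^2 = (2*K)^2 by ring, Real.sqrt_sq (by positivity)]
  -- the sum bound
  have hSle : ∀ t ∈ Set.Icc (0:ℝ) T,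
      (∫ x in Set.Ioi (0:ℝ), (r₁ t x + r₂ t x)^2 * Real.exp (γ*x)) ≤ (2*K)^2 := by
    intro t ht
    have h2 := ((hr₁int t ht).const_mul 2).add ((hr₂int t ht).const_mul 2)
    calc (∫ x in Set.Ioi (0:ℝ), (r₁ t x + r₂ t x)^2 * Real.exp (γ*x))
        ≤ ∫ x in Set.Ioi (0:ℝ),
            (2*(r₁ t x ^2 * Real.exp (γ*x)) + 2*(r₂ t x ^2 * Real.exp (γ*x))) := by
          refine setIntegral_mono_on (hSsq_int t ht) h2 measurableSet_Ioi fun x _ => ?_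
          have he := (Real.exp_pos (γ*x)).le
          nlinarith [mul_nonneg (sq_nonneg (r₁ t x - r₂ t x)) he]
      _ = 2*(∫ x in Set.Ioi (0:ℝ), r₁ t x ^2 * Real.exp (γ*x))
          + 2*(∫ x in Set.Ioi (0:ℝ), r₂ t x ^2 * Real.exp (γ*x)) := by
          rw [integral_add ((hr₁int t ht).const_mul 2) ((hr₂int t ht).const_mul 2),
            integral_const_mul, integral_const_mul]
      _ ≤ (2*K)^2 := by
          have := hsq_le t ht
          nlinarith [this.1, this.2]
  -- weighted Cauchy-Schwarz for |r₁ - r₂|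
  have hWΔ : ∀ t ∈ Set.Icc (0:ℝ) T,
      IntegrableOn (fun x => |r₁ t x - r₂ t x|) (Set.Ioi 0) ∧
      (∫ x in Set.Ioi (0:ℝ), |r₁ t x - r₂ t x|) ≤ φ t / Real.sqrt γ := by
    intro t ht
    have hm : Measurable fun x => |r₁ t x - r₂ t x| := ((hmr₁ t).sub (hmr₂ t)).abs
    have hi : IntegrableOn (fun x => |r₁ t x - r₂ t x| ^2 * Real.exp (γ*x)) (Set.Ioi 0) := by
      refine (hΔsq_int t ht).congr (Eventually.of_forall fun x => ?_)
      simp only [sq_abs]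
    have h := weightedCS hγ hm (fun x => abs_nonneg _) hi
    refine ⟨h.1, le_trans h.2 ?_⟩
    have : (∫ x in Set.Ioi (0:ℝ), |r₁ t x - r₂ t x| ^2 * Real.exp (γ*x))
        = ∫ x in Set.Ioi (0:ℝ), (r₁ t x - r₂ t x)^2 * Real.exp (γ*x) := by
      refine setIntegral_congr_fun measurableSet_Ioi fun x _ => ?_
      simp only [sq_abs]
    rw [this]
  -- φ is measurable
  have hφmeas : Measurable φ := by
    have hG : Measurable fun p : ℝ × ℝ => Set.indicator {q : ℝ × ℝ | 0 < q.2}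
        (fun q => (r₁ q.1 q.2 - r₂ q.1 q.2)^2 * Real.exp (γ * q.2)) p := by
      refine Measurable.indicator ?_ (measurableSet_lt measurable_const measurable_snd)
      exact ((hr₁meas.sub hr₂meas).pow_const 2).mul (by fun_prop)
    have hmint : Measurable fun t => ∫ x, Set.indicator {q : ℝ × ℝ | 0 < q.2}
        (fun q => (r₁ q.1 q.2 - r₂ q.1 q.2)^2 * Real.exp (γ * q.2)) (t, x) :=
      (hG.stronglyMeasurable.integral_prod_right').measurable
    have hrepr : φ = fun t => Real.sqrt (∫ x, Set.indicator {q : ℝ × ℝ | 0 < q.2}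
        (fun q => (r₁ q.1 q.2 - r₂ q.1 q.2)^2 * Real.exp (γ * q.2)) (t, x)) := by
      funext t
      show Real.sqrt (∫ x in Set.Ioi (0:ℝ), (r₁ t x - r₂ t x)^2 * Real.exp (γ * x)) = _
      congr 1
      rw [← MeasureTheory.integral_indicator measurableSet_Ioi]
      refine integral_congr_ae (Eventually.of_forall fun x => ?_)
      simp only [Set.indicator_apply, Set.mem_Ioi, Set.mem_setOf_eq]
    rw [hrepr]
    exact Real.continuous_sqrt.measurable.comp hmint
  -- constants
  set c₀ : ℝ := (L:ℝ) * lamHi^2 / Real.sqrt γ with hc₀def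
  have hc₀ : 0 ≤ c₀ := by positivity
  set C' : ℝ := 2 * K * c₀ with hC'def
  have hC' : 0 ≤ C' := by positivity
  -- measurable surrogate for the inner integrals
  have hsur : ∀ r : ℝ → ℝ → ℝ, Measurable (Function.uncurry r) → ∀ t x : ℝ,
      ∃ F : ℝ → ℝ, Measurable F ∧
        ∀ s, 0 ≤ t - s + x → F s = ∫ v in (0:ℝ)..(t - s + x), lam s v * r s v := by
    intro r hrm t x
    refine ⟨fun s => ∫ v, Set.indicator {q : ℝ × ℝ | 0 < q.2 ∧ q.2 ≤ t - q.1 + x}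
      (fun q => lam q.1 q.2 * r q.1 q.2) (s, v), ?_, ?_⟩
    · have hset : MeasurableSet {q : ℝ × ℝ | 0 < q.2 ∧ q.2 ≤ t - q.1 + x} := by
        refine MeasurableSet.inter (measurableSet_lt measurable_const measurable_snd) ?_
        exact measurableSet_le measurable_snd (by fun_prop)
      exact (((hlamMeas.mul hrm).indicator hset).stronglyMeasurable.integral_prod_right').measurable
    · intro s hs
      have : (∫ v in (0:ℝ)..(t - s + x), lam s v * r s v)
          = ∫ v, Set.indicator {q : ℝ × ℝ | 0 < q.2 ∧ q.2 ≤ t - q.1 + x}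
              (fun q => lam q.1 q.2 * r q.1 q.2) (s, v) := by
        rw [intervalIntegral.integral_of_le (by linarith),
          ← MeasureTheory.integral_indicator measurableSet_Ioc]
        refine integral_congr_ae (Eventually.of_forall fun v => ?_)
        simp only [Set.indicator_apply, Set.mem_Ioc, Set.mem_setOf_eq]
      exact this.symm
  -- basic facts about the inner integrals
  have hfacts : ∀ (r : ℝ → ℝ → ℝ), (∀ t x, 0 ≤ r t x) → Measurable (Function.uncurry r) →
      (∀ t ∈ Set.Icc (0:ℝ) T, IntegrableOn (fun x => r t x ^ 2 * Real.exp (γ*x)) (Set.Ioi 0)) →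
      (∀ t ∈ Set.Icc (0:ℝ) T, L2wNorm γ (r t) ≤ K) →
      ∀ s ∈ Set.Icc (0:ℝ) T, ∀ c, 0 ≤ c →
        IntegrableOn (fun v => lam s v * r s v) (Set.Ioc 0 c) ∧
        0 ≤ (∫ v in (0:ℝ)..c, lam s v * r s v) ∧
        (∫ v in (0:ℝ)..c, lam s v * r s v) ≤ lamHi * (K / Real.sqrt γ) := by
    intro r hrnn hrm hrint hrK s hs c hc
    have hrsm : Measurable (r s) := hrm.of_uncurry_left
    have hCS := weightedCS hγ hrsm (hrnn s) (hrint s hs)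
    have hIr : IntegrableOn (r s) (Set.Ioi 0) := hCS.1
    have hIoc : IntegrableOn (r s) (Set.Ioc 0 c) := hIr.mono_set Set.Ioc_subset_Ioi_self
    have hlamb : ∀ᵐ v ∂(volume.restrict (Set.Ioc (0:ℝ) c)), ‖lam s v‖ ≤ lamHi := by
      rw [ae_restrict_iff' measurableSet_Ioc]
      refine Eventually.of_forall fun v hv => ?_
      rw [Real.norm_eq_abs, abs_of_nonneg (le_trans hlamLo.le (hlam s hs v hv.1.le).1)]
      exact (hlam s hs v hv.1.le).2
    have hint : IntegrableOn (fun v => lam s v * r s v) (Set.Ioc 0 c) :=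
      hIoc.bdd_mul ((hlamMeas.of_uncurry_left).aestronglyMeasurable) hlamb
    refine ⟨hint, ?_, ?_⟩
    · exact intervalIntegral.integral_nonneg hc fun u hu =>
        mul_nonneg (le_trans hlamLo.le (hlam s hs u hu.1).1) (hrnn s u)
    · rw [intervalIntegral.integral_of_le hc]
      have hKk : Real.sqrt (∫ x in Set.Ioi (0:ℝ), r s x ^2 * Real.exp (γ*x)) ≤ K := hrK s hs
      calc (∫ v in Set.Ioc (0:ℝ) c, lam s v * r s v)
          ≤ ∫ v in Set.Ioc (0:ℝ) c, lamHi * r s v := by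
            refine setIntegral_mono_on hint (hIoc.const_mul lamHi) measurableSet_Ioc fun v hv => ?_
            exact mul_le_mul_of_nonneg_right (hlam s hs v hv.1.le).2 (hrnn s v)
        _ = lamHi * ∫ v in Set.Ioc (0:ℝ) c, r s v := by rw [integral_const_mul]
        _ ≤ lamHi * ∫ v in Set.Ioi (0:ℝ), r s v := by
            refine mul_le_mul_of_nonneg_left ?_ hlamHi.le
            refine setIntegral_mono_set hIr ?_
              (HasSubset.Subset.eventuallyLE Set.Ioc_subset_Ioi_self)
            exact Eventually.of_forall fun v => hrnn s v
        _ ≤ lamHi * (K / Real.sqrt γ) := by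
            refine mul_le_mul_of_nonneg_left (le_trans hCS.2 ?_) hlamHi.le
            exact (div_le_div_iff_of_pos_right hsγ).2 hKk
  -- interval integrability of φ
  have hφIntOn : ∀ t ∈ Set.Icc (0:ℝ) T, IntervalIntegrable φ volume 0 t := by
    intro t ht
    rw [intervalIntegrable_iff_integrableOn_Ioc_of_le ht.1]
    refine Measure.integrableOn_of_bounded (M := 2*K) measure_Ioc_lt_top.ne
      hφmeas.aestronglyMeasurable ?_
    rw [ae_restrict_iff' measurableSet_Ioc]
    refine Eventually.of_forall fun s hs => ?_
    rw [Real.norm_eq_abs, abs_of_nonneg (hφnn s)]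
    exact hφle s ⟨hs.1.le, le_trans hs.2 ht.2⟩
  -- the key Gronwall-type inequality
  have keyB : ∀ t ∈ Set.Icc (0:ℝ) T, φ t ≤ C' * ∫ s in (0:ℝ)..t, φ s := by
    intro t ht
    set E : ℝ := ∫ s in (0:ℝ)..t, φ s with hEdef
    have hE : 0 ≤ E := intervalIntegral.integral_nonneg ht.1 fun s _ => hφnn s
    -- pointwise bound
    have hpt : ∀ x, 0 ≤ x → |r₁ t x - r₂ t x| ≤ (r₁ t x + r₂ t x) * (c₀ * E) := by
      intro x hx
      obtain ⟨F₁, hF₁m, hF₁⟩ := hsur r₁ hr₁meas t x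
      obtain ⟨F₂, hF₂m, hF₂⟩ := hsur r₂ hr₂meas t x
      set g₁ : ℝ → ℝ := fun s => Jm (F₁ s) * lam s (t - s + x) with hg₁def
      set g₂ : ℝ → ℝ := fun s => Jm (F₂ s) * lam s (t - s + x) with hg₂def
      have hcge : ∀ s ∈ Set.Icc (0:ℝ) t, 0 ≤ t - s + x := fun s hs => by
        have := hs.2; linarith
      have hsub : Set.Icc (0:ℝ) t ⊆ Set.Icc (0:ℝ) T := Set.Icc_subset_Icc le_rfl ht.2
      have hg₁eq : ∀ s ∈ Set.Icc (0:ℝ) t,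
          g₁ s = J' (∫ v in (0:ℝ)..(t - s + x), lam s v * r₁ s v) * lam s (t - s + x) := by
        intro s hs
        have h1 := hF₁ s (hcge s hs)
        have hnn := (hfacts r₁ hr₁nn hr₁meas hr₁int hK₁' s (hsub hs) _ (hcge s hs)).2.1
        show Jm (F₁ s) * lam s (t - s + x) = _
        rw [h1]
        simp only [hJmdef]
        rw [max_eq_left hnn]
      have hg₂eq : ∀ s ∈ Set.Icc (0:ℝ) t,
          g₂ s = J' (∫ v in (0:ℝ)..(t - s + x), lam s v * r₂ s v) * lam s (t - s + x) := by
        intro s hs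
        have h1 := hF₂ s (hcge s hs)
        have hnn := (hfacts r₂ hr₂nn hr₂meas hr₂int hK₂' s (hsub hs) _ (hcge s hs)).2.1
        show Jm (F₂ s) * lam s (t - s + x) = _
        rw [h1]
        simp only [hJmdef]
        rw [max_eq_left hnn]
      -- bounds on g₁, g₂
      set Mg : ℝ := ((L:ℝ) * (lamHi * (K / Real.sqrt γ)) + |J' 0|) * lamHi with hMgdef
      have hJmabs : ∀ y : ℝ, 0 ≤ y → y ≤ lamHi * (K / Real.sqrt γ) →
          |Jm y| ≤ (L:ℝ) * (lamHi * (K / Real.sqrt γ)) + |J' 0| := by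
        intro y hy hyB
        have hd := hJmLip.dist_le_mul y 0
        rw [Real.dist_eq, Real.dist_eq, sub_zero] at hd
        have h1 : |Jm y| ≤ |Jm y - Jm 0| + |Jm 0| := by
          calc |Jm y| = |Jm y - Jm 0 + Jm 0| := by ring_nf
            _ ≤ |Jm y - Jm 0| + |Jm 0| := abs_add_le _ _
        refine le_trans h1 (add_le_add ?_ (le_of_eq (by rw [hJm0])))
        refine le_trans hd ?_
        rw [abs_of_nonneg hy]
        exact mul_le_mul_of_nonneg_left hyB L.coe_nonneg
      have hlamb : ∀ s ∈ Set.Icc (0:ℝ) t, |lam s (t - s + x)| ≤ lamHi := fun s hs => by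
        rw [abs_of_nonneg (le_trans hlamLo.le (hlam s (hsub hs) _ (hcge s hs)).1)]
        exact (hlam s (hsub hs) _ (hcge s hs)).2
      have hgbd : ∀ s ∈ Set.Icc (0:ℝ) t, |g₁ s| ≤ Mg ∧ |g₂ s| ≤ Mg := by
        intro s hs
        have hf₁ := hfacts r₁ hr₁nn hr₁meas hr₁int hK₁' s (hsub hs) _ (hcge s hs)
        have hf₂ := hfacts r₂ hr₂nn hr₂meas hr₂int hK₂' s (hsub hs) _ (hcge s hs)
        have e₁ := hF₁ s (hcge s hs)
        have e₂ := hF₂ s (hcge s hs)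
        constructor
        · show |Jm (F₁ s) * lam s (t - s + x)| ≤ Mg
          rw [abs_mul, hMgdef]
          refine mul_le_mul (hJmabs (F₁ s) (e₁ ▸ hf₁.2.1) (e₁ ▸ hf₁.2.2)) (hlamb s hs)
            (abs_nonneg _) ?_
          positivity
        · show |Jm (F₂ s) * lam s (t - s + x)| ≤ Mg
          rw [abs_mul, hMgdef]
          refine mul_le_mul (hJmabs (F₂ s) (e₂ ▸ hf₂.2.1) (e₂ ▸ hf₂.2.2)) (hlamb s hs)
            (abs_nonneg _) ?_
          positivity
      have hlammeas : Measurable fun s => lam s (t - s + x) := by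
        have : Measurable fun s : ℝ => (s, t - s + x) :=
          measurable_id.prodMk (by fun_prop)
        exact hlamMeas.comp this
      have hg₁int : IntervalIntegrable g₁ volume 0 t := by
        rw [intervalIntegrable_iff_integrableOn_Ioc_of_le ht.1]
        refine Measure.integrableOn_of_bounded (M := Mg) measure_Ioc_lt_top.ne
          (((hJmLip.continuous.measurable.comp hF₁m).mul hlammeas).aestronglyMeasurable) ?_
        rw [ae_restrict_iff' measurableSet_Ioc]
        refine Eventually.of_forall fun s hs => ?_
        rw [Real.norm_eq_abs]
        exact (hgbd s ⟨hs.1.le, hs.2⟩).1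
      have hg₂int : IntervalIntegrable g₂ volume 0 t := by
        rw [intervalIntegrable_iff_integrableOn_Ioc_of_le ht.1]
        refine Measure.integrableOn_of_bounded (M := Mg) measure_Ioc_lt_top.ne
          (((hJmLip.continuous.measurable.comp hF₂m).mul hlammeas).aestronglyMeasurable) ?_
        rw [ae_restrict_iff' measurableSet_Ioc]
        refine Eventually.of_forall fun s hs => ?_
        rw [Real.norm_eq_abs]
        exact (hgbd s ⟨hs.1.le, hs.2⟩).2
      -- difference bound
      have hdiff : ∀ s ∈ Set.Icc (0:ℝ) t, |g₁ s - g₂ s| ≤ c₀ * φ s := by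
        intro s hs
        have hsT : s ∈ Set.Icc (0:ℝ) T := hsub hs
        have hc : 0 ≤ t - s + x := hcge s hs
        have hf₁ := hfacts r₁ hr₁nn hr₁meas hr₁int hK₁' s hsT _ hc
        have hf₂ := hfacts r₂ hr₂nn hr₂meas hr₂int hK₂' s hsT _ hc
        have h₁' : IntervalIntegrable (fun v => lam s v * r₁ s v) volume 0 (t - s + x) :=
          (intervalIntegrable_iff_integrableOn_Ioc_of_le hc).2 hf₁.1
        have h₂' : IntervalIntegrable (fun v => lam s v * r₂ s v) volume 0 (t - s + x) :=
          (intervalIntegrable_iff_integrableOn_Ioc_of_le hc).2 hf₂.1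
        have hFF : F₁ s - F₂ s
            = ∫ v in (0:ℝ)..(t - s + x), (lam s v * r₁ s v - lam s v * r₂ s v) := by
          rw [hF₁ s hc, hF₂ s hc, ← intervalIntegral.integral_sub h₁' h₂']
        have hIabs : |F₁ s - F₂ s| ≤ lamHi * (φ s / Real.sqrt γ) := by
          rw [hFF]
          refine le_trans (intervalIntegral.abs_integral_le_integral_abs hc) ?_
          rw [intervalIntegral.integral_of_le hc]
          have hintabs : IntegrableOn
              (fun v => |lam s v * r₁ s v - lam s v * r₂ s v|) (Set.Ioc 0 (t - s + x)) :=
            (hf₁.1.sub hf₂.1).abs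
          have hintb : IntegrableOn (fun v => lamHi * |r₁ s v - r₂ s v|)
              (Set.Ioc 0 (t - s + x)) :=
            ((hWΔ s hsT).1.mono_set Set.Ioc_subset_Ioi_self).const_mul lamHi
          calc (∫ v in Set.Ioc (0:ℝ) (t - s + x), |lam s v * r₁ s v - lam s v * r₂ s v|)
              ≤ ∫ v in Set.Ioc (0:ℝ) (t - s + x), lamHi * |r₁ s v - r₂ s v| := by
                refine setIntegral_mono_on hintabs hintb measurableSet_Ioc fun v hv => ?_
                rw [← mul_sub, abs_mul,
                  abs_of_nonneg (le_trans hlamLo.le (hlam s hsT v hv.1.le).1)]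
                exact mul_le_mul_of_nonneg_right (hlam s hsT v hv.1.le).2 (abs_nonneg _)
            _ = lamHi * ∫ v in Set.Ioc (0:ℝ) (t - s + x), |r₁ s v - r₂ s v| := by
                rw [integral_const_mul]
            _ ≤ lamHi * ∫ v in Set.Ioi (0:ℝ), |r₁ s v - r₂ s v| := by
                refine mul_le_mul_of_nonneg_left ?_ hlamHi.le
                refine setIntegral_mono_set (hWΔ s hsT).1 ?_
                  (HasSubset.Subset.eventuallyLE Set.Ioc_subset_Ioi_self)
                exact Eventually.of_forall fun v => abs_nonneg _
            _ ≤ lamHi * (φ s / Real.sqrt γ) :=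
                mul_le_mul_of_nonneg_left (hWΔ s hsT).2 hlamHi.le
        have hgg : g₁ s - g₂ s = (Jm (F₁ s) - Jm (F₂ s)) * lam s (t - s + x) := by
          show Jm (F₁ s) * lam s (t - s + x) - Jm (F₂ s) * lam s (t - s + x) = _
          ring
        rw [hgg, abs_mul]
        have hJJ : |Jm (F₁ s) - Jm (F₂ s)| ≤ (L:ℝ) * |F₁ s - F₂ s| := by
          have := hJmLip.dist_le_mul (F₁ s) (F₂ s)
          rwa [Real.dist_eq, Real.dist_eq] at this
        calc |Jm (F₁ s) - Jm (F₂ s)| * |lam s (t - s + x)|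
            ≤ ((L:ℝ) * (lamHi * (φ s / Real.sqrt γ))) * lamHi := by
              refine mul_le_mul (le_trans hJJ ?_) (hlamb s hs) (abs_nonneg _) (by positivity)
              exact mul_le_mul_of_nonneg_left hIabs L.coe_nonneg
          _ = c₀ * φ s := by
              rw [hc₀def]
              field_simp
      -- bound on the difference of the exponents
      have hAA : |(∫ s in (0:ℝ)..t, g₁ s) - ∫ s in (0:ℝ)..t, g₂ s| ≤ c₀ * E := by
        rw [← intervalIntegral.integral_sub hg₁int hg₂int]
        have hb2 : IntervalIntegrable (fun s => c₀ * φ s) volume 0 t :=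
          (hφIntOn t ht).const_mul c₀
        have hae : ∀ᵐ s ∂volume.restrict (Set.uIoc (0:ℝ) t), ‖g₁ s - g₂ s‖ ≤ c₀ * φ s := by
          rw [Set.uIoc_of_le ht.1, ae_restrict_iff' measurableSet_Ioc]
          refine Eventually.of_forall fun s hs => ?_
          rw [Real.norm_eq_abs]
          exact hdiff s ⟨hs.1.le, hs.2⟩
        refine le_trans (intervalIntegral.norm_integral_le_of_norm_le ht.1 ((ae_restrict_iff' measurableSet_Ioc).1 (by rwa [Set.uIoc_of_le ht.1] at hae)) hb2) ?_
        rw [intervalIntegral.integral_const_mul]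
      -- assemble
      have e₁ := hfix₁ t ht x hx
      have e₂ := hfix₂ t ht x hx
      have hA₁ : (∫ s in (0:ℝ)..t,
          J' (∫ v in (0:ℝ)..(t - s + x), lam s v * r₁ s v) * lam s (t - s + x))
          = ∫ s in (0:ℝ)..t, g₁ s := by
        refine intervalIntegral.integral_congr fun s hs => ?_
        rw [Set.uIcc_of_le ht.1] at hs
        exact (hg₁eq s hs).symm
      have hA₂ : (∫ s in (0:ℝ)..t,
          J' (∫ v in (0:ℝ)..(t - s + x), lam s v * r₂ s v) * lam s (t - s + x))
          = ∫ s in (0:ℝ)..t, g₂ s := by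
        refine intervalIntegral.integral_congr fun s hs => ?_
        rw [Set.uIcc_of_le ht.1] at hs
        exact (hg₂eq s hs).symm
      rw [e₁, e₂]
      simp only [Kop]
      rw [hA₁, hA₂]
      set A₁ : ℝ := ∫ s in (0:ℝ)..t, g₁ s with hA₁def
      set A₂ : ℝ := ∫ s in (0:ℝ)..t, g₂ s with hA₂def
      have hr0 : 0 ≤ r₀ (t+x) := hr₀pos _ (by linarith [ht.1])
      have hbx := hb t ht x hx
      calc |r₀ (t+x) * b t x * Real.exp A₁ - r₀ (t+x) * b t x * Real.exp A₂|
          = r₀ (t+x) * b t x * |Real.exp A₁ - Real.exp A₂| := by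
            rw [← mul_sub, abs_mul, abs_of_nonneg (mul_nonneg hr0 hbx.1)]
        _ ≤ r₀ (t+x) * b t x * ((Real.exp A₁ + Real.exp A₂) * |A₁ - A₂|) :=
            mul_le_mul_of_nonneg_left (abs_exp_sub_exp_le _ _) (mul_nonneg hr0 hbx.1)
        _ ≤ r₀ (t+x) * b t x * ((Real.exp A₁ + Real.exp A₂) * (c₀ * E)) := by
            refine mul_le_mul_of_nonneg_left (mul_le_mul_of_nonneg_left hAA ?_)
              (mul_nonneg hr0 hbx.1)
            positivity
        _ = (r₀ (t+x) * b t x * Real.exp A₁ + r₀ (t+x) * b t x * Real.exp A₂) * (c₀ * E) := by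
            ring
    -- integrate the square of the pointwise bound
    have hptsq : ∀ x ∈ Set.Ioi (0:ℝ), (r₁ t x - r₂ t x)^2 * Real.exp (γ*x)
        ≤ (c₀*E)^2 * ((r₁ t x + r₂ t x)^2 * Real.exp (γ*x)) := by
      intro x hx
      have h1 := hpt x (le_of_lt hx)
      have h2 : (r₁ t x - r₂ t x)^2 ≤ ((r₁ t x + r₂ t x) * (c₀*E))^2 := by
        rw [← sq_abs (r₁ t x - r₂ t x)]
        exact pow_le_pow_left₀ (abs_nonneg _) h1 2
      calc (r₁ t x - r₂ t x)^2 * Real.exp (γ*x)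
          ≤ ((r₁ t x + r₂ t x) * (c₀*E))^2 * Real.exp (γ*x) :=
            mul_le_mul_of_nonneg_right h2 (Real.exp_pos _).le
        _ = (c₀*E)^2 * ((r₁ t x + r₂ t x)^2 * Real.exp (γ*x)) := by ring
    have hint2 : IntegrableOn
        (fun x => (c₀*E)^2 * ((r₁ t x + r₂ t x)^2 * Real.exp (γ*x))) (Set.Ioi 0) :=
      (hSsq_int t ht).const_mul _
    have hphit : φ t ≤ Real.sqrt ((c₀*E*(2*K))^2) := by
      refine Real.sqrt_le_sqrt ?_
      calc (∫ x in Set.Ioi (0:ℝ), (r₁ t x - r₂ t x)^2 * Real.exp (γ*x))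
          ≤ ∫ x in Set.Ioi (0:ℝ), (c₀*E)^2 * ((r₁ t x + r₂ t x)^2 * Real.exp (γ*x)) :=
            setIntegral_mono_on (hΔsq_int t ht) hint2 measurableSet_Ioi hptsq
        _ = (c₀*E)^2 * ∫ x in Set.Ioi (0:ℝ), (r₁ t x + r₂ t x)^2 * Real.exp (γ*x) := by
            rw [integral_const_mul]
        _ ≤ (c₀*E)^2 * (2*K)^2 :=
            mul_le_mul_of_nonneg_left (hSle t ht) (sq_nonneg _)
        _ = (c₀*E*(2*K))^2 := by ring
    have hnn2 : 0 ≤ c₀*E*(2*K) := mul_nonneg (mul_nonneg hc₀ hE) (by linarith)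
    calc φ t ≤ Real.sqrt ((c₀*E*(2*K))^2) := hphit
      _ = c₀*E*(2*K) := Real.sqrt_sq hnn2
      _ = C' * E := by rw [hC'def]; ring
  -- Gronwall iteration
  have gron : ∀ n : ℕ, ∀ t ∈ Set.Icc (0:ℝ) T, φ t ≤ 2*K * (C'*t)^n / n.factorial := by
    intro n
    induction n with
    | zero => intro t ht; simpa using hφle t ht
    | succ n ih =>
      intro t ht
      refine le_trans (keyB t ht) ?_
      have hmono : (∫ s in (0:ℝ)..t, φ s) ≤ ∫ s in (0:ℝ)..t, 2*K*C'^n/(n.factorial:ℝ) * s^n := by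
        refine intervalIntegral.integral_mono_on ht.1 (hφIntOn t ht) ?_ fun s hs => ?_
        · exact (Continuous.intervalIntegrable (by fun_prop) 0 t)
        · have h1 := ih s ⟨hs.1, le_trans hs.2 ht.2⟩
          calc φ s ≤ 2*K*(C'*s)^n/(n.factorial:ℝ) := h1
            _ = 2*K*C'^n/(n.factorial:ℝ) * s^n := by rw [mul_pow]; ring
      have hval : (∫ s in (0:ℝ)..t, 2*K*C'^n/(n.factorial:ℝ) * s^n)
          = 2*K*C'^n/(n.factorial:ℝ) * (t^(n+1)/(n+1)) := by
        rw [intervalIntegral.integral_const_mul, integral_pow]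
        rw [zero_pow (Nat.succ_ne_zero n)]
        ring
      have hfac : ((n+1).factorial : ℝ) = ((n:ℝ)+1) * (n.factorial : ℝ) := by
        rw [Nat.factorial_succ]; push_cast; ring
      have hnf : ((n.factorial : ℝ)) ≠ 0 := Nat.cast_ne_zero.2 (Nat.factorial_ne_zero n)
      have hn1 : ((n:ℝ)+1) ≠ 0 := by positivity
      calc C' * ∫ s in (0:ℝ)..t, φ s
          ≤ C' * (2*K*C'^n/(n.factorial:ℝ) * (t^(n+1)/(n+1))) := by
            rw [← hval]; exact mul_le_mul_of_nonneg_left hmono hC'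
        _ = 2*K * (C'*t)^(n+1) / ((n+1).factorial : ℝ) := by
            rw [hfac, mul_pow]
            field_simp
            ring
  -- φ vanishes on [0,T]
  have hφzero : ∀ t ∈ Set.Icc (0:ℝ) T, φ t = 0 := by
    intro t ht
    have hle0 : φ t ≤ 0 := by
      have htnd : Tendsto (fun n : ℕ => 2*K * ((C'*T)^n / (n.factorial:ℝ))) atTop (nhds 0) := by
        have h0 := FloorSemiring.tendsto_pow_div_factorial_atTop (K := ℝ) (C'*T)
        simpa using h0.const_mul (2*K)
      refine ge_of_tendsto' htnd fun n => ?_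
      refine le_trans (gron n t ht) ?_
      have hp : (C'*t)^n ≤ (C'*T)^n :=
        pow_le_pow_left₀ (mul_nonneg hC' ht.1) (mul_le_mul_of_nonneg_left ht.2 hC') n
      have h2 : (0:ℝ) < (n.factorial : ℝ) := by
        exact_mod_cast Nat.factorial_pos n
      rw [mul_div_assoc]
      refine mul_le_mul_of_nonneg_left ?_ (by linarith)
      gcongr
    exact le_antisymm hle0 (hφnn t)
  -- conclusion
  intro t ht x hx
  have haeq : ∀ s ∈ Set.Icc (0:ℝ) T, ∀ᵐ v ∂(volume : Measure ℝ),
      v ∈ Set.Ioi (0:ℝ) → r₁ s v = r₂ s v := by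
    intro s hs
    have h0 : (∫ v in Set.Ioi (0:ℝ), (r₁ s v - r₂ s v)^2 * Real.exp (γ*v)) = 0 := by
      have h1 := hφzero s hs
      have h2 : 0 ≤ ∫ v in Set.Ioi (0:ℝ), (r₁ s v - r₂ s v)^2 * Real.exp (γ*v) :=
        setIntegral_nonneg measurableSet_Ioi fun v _ => by positivity
      have h3 : (∫ v in Set.Ioi (0:ℝ), (r₁ s v - r₂ s v)^2 * Real.exp (γ*v)) ≤ 0 :=
        Real.sqrt_eq_zero'.1 h1
      linarith
    have h4 := (integral_eq_zero_iff_of_nonneg_ae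
      (Eventually.of_forall fun v => by positivity) (hΔsq_int s hs)).1 h0
    have h5 := (ae_restrict_iff' measurableSet_Ioi).1 h4
    refine h5.mono fun v hv hv' => ?_
    have h6 := hv hv'
    simp only [Pi.zero_apply] at h6
    have hexp := (Real.exp_pos (γ*v)).ne'
    have h7 : (r₁ s v - r₂ s v)^2 = 0 := by
      rcases mul_eq_zero.1 h6 with h | h
      · exact h
      · exact absurd h hexp
    have h8 := (pow_eq_zero_iff (by norm_num : (2:ℕ) ≠ 0)).1 h7
    linarith [sub_eq_zero.1 h8]
  have hAeq : (∫ s in (0:ℝ)..t,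
      J' (∫ v in (0:ℝ)..(t - s + x), lam s v * r₁ s v) * lam s (t - s + x))
      = ∫ s in (0:ℝ)..t,
      J' (∫ v in (0:ℝ)..(t - s + x), lam s v * r₂ s v) * lam s (t - s + x) := by
    refine intervalIntegral.integral_congr fun s hs => ?_
    rw [Set.uIcc_of_le ht.1] at hs
    have hs' : s ∈ Set.Icc (0:ℝ) T := ⟨hs.1, le_trans hs.2 ht.2⟩
    have hc : 0 ≤ t - s + x := by
      have := hs.2; linarith
    have hIeq : (∫ v in (0:ℝ)..(t - s + x), lam s v * r₁ s v)
        = ∫ v in (0:ℝ)..(t - s + x), lam s v * r₂ s v := by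
      refine intervalIntegral.integral_congr_ae ?_
      refine (haeq s hs').mono fun v hv hv' => ?_
      rw [Set.uIoc_of_le hc] at hv'
      rw [hv (Set.Ioc_subset_Ioi_self hv')]
    rw [hIeq]
  rw [hfix₁ t ht x hx, hfix₂ t ht x hx]
  simp only [Kop]
  rw [hAeq]
end

section
/- Let T* > 0, γ > 0, λ̲, λ̄, b̄ > 0 and let λ̃ : [0,T*] × [0,∞) → ℝ be measurable with λ̲ ≤ λ̃(t,x) ≤ λ̄, let b̃ : [0,T*] × [0,∞) → [0,∞) be measurable with b̃ ≤ b̄, let r₀ : [0,∞) → [0,∞) be measurable with sup_{x≥0} r₀(x) < ∞, and let J′ : [0,∞) → ℝ be nondecreasing. If r ∈ 𝕃^{2,γ}_+ satisfies r = 𝒦r on [0,T*] × [0,∞), then r is bounded: sup_{t∈[0,T*], x≥0} r(t,x) ≤ (sup_{x≥0} r₀(x)) · b̄ · exp( |J′( (λ̄/√γ) ‖r‖_{𝕃^{2,γ}} )| · λ̄ T* ) < ∞. -/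
open MeasureTheory Set Filter

lemma myIntegrableMul {μ : Measure ℝ} {f g : ℝ → ℝ}
    (hf : MemLp f 2 μ) (hg : MemLp g 2 μ) :
    Integrable (fun x => f x * g x) μ := by
  have h := L2.integrable_inner (𝕜 := ℝ) (hf.toLp f) (hg.toLp g)
  refine h.congr ?_
  filter_upwards [hf.coeFn_toLp, hg.coeFn_toLp] with x hx hy
  simp [hx, hy, RCLike.inner_apply, mul_comm]

lemma myCS {μ : Measure ℝ} {f g : ℝ → ℝ}
    (hf : MemLp f 2 μ) (hg : MemLp g 2 μ) :
    ∫ x, f x * g x ∂μ ≤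
      Real.sqrt (∫ x, f x ^ 2 ∂μ) * Real.sqrt (∫ x, g x ^ 2 ∂μ) := by
  set F := hf.toLp f
  set G := hg.toLp g
  have h1 : (inner ℝ F G : ℝ) = ∫ x, f x * g x ∂μ := by
    rw [L2.inner_def]
    refine integral_congr_ae ?_
    filter_upwards [hf.coeFn_toLp, hg.coeFn_toLp] with x hx hy
    simp [F, G, hx, hy, RCLike.inner_apply, mul_comm]
  have hFsq : ‖F‖ ^ 2 = ∫ x, f x ^ 2 ∂μ := by
    rw [← real_inner_self_eq_norm_sq, L2.inner_def]
    refine integral_congr_ae ?_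
    filter_upwards [hf.coeFn_toLp] with x hx
    simp [F, hx, RCLike.inner_apply, sq]
  have hGsq : ‖G‖ ^ 2 = ∫ x, g x ^ 2 ∂μ := by
    rw [← real_inner_self_eq_norm_sq, L2.inner_def]
    refine integral_congr_ae ?_
    filter_upwards [hg.coeFn_toLp] with x hx
    simp [G, hx, RCLike.inner_apply, sq]
  calc ∫ x, f x * g x ∂μ = inner ℝ F G := h1.symm
    _ ≤ ‖F‖ * ‖G‖ := real_inner_le_norm F G
    _ = Real.sqrt (∫ x, f x ^ 2 ∂μ) * Real.sqrt (∫ x, g x ^ 2 ∂μ) := by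
        rw [← hFsq, ← hGsq, Real.sqrt_sq (norm_nonneg _), Real.sqrt_sq (norm_nonneg _)]

/-- If `r₀` is bounded and `r ∈ 𝕃^{2,γ}_+` satisfies `r = 𝒦r`, then
`r` is bounded:
`r(t,x) ≤ (sup r₀) · b̄ · exp(|J′((λ̄/√γ) ‖r‖_{𝕃^{2,γ}})| λ̄ T*)` on `[0,T*] × [0,∞)`. -/
theorem Kop_fixed_point_bounded
    (T γ lamLo lamHi bBar : ℝ) (hT : 0 < T) (hγ : 0 < γ)
    (hlamLo : 0 < lamLo) (hlamHi : 0 < lamHi) (hbBar : 0 < bBar)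
    (lam : ℝ → ℝ → ℝ) (hlamMeas : Measurable (Function.uncurry lam))
    (hlam : ∀ t ∈ Set.Icc (0:ℝ) T, ∀ x ≥ (0:ℝ),
      lamLo ≤ lam t x ∧ lam t x ≤ lamHi)
    (b : ℝ → ℝ → ℝ) (hbMeas : Measurable (Function.uncurry b))
    (hb : ∀ t ∈ Set.Icc (0:ℝ) T, ∀ x ≥ (0:ℝ), 0 ≤ b t x ∧ b t x ≤ bBar)
    (r₀ : ℝ → ℝ) (hr₀Meas : Measurable r₀) (hr₀pos : ∀ x ≥ (0:ℝ), 0 ≤ r₀ x)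
    (hr₀bdd : BddAbove (r₀ '' Set.Ici 0))
    (J' : ℝ → ℝ) (hJmono : MonotoneOn J' (Set.Ici 0))
    (r : ℝ → ℝ → ℝ) (hr : MemLL2 T γ r)
    (hfix : ∀ t ∈ Set.Icc (0:ℝ) T, ∀ x ≥ (0:ℝ),
      r t x = Kop r₀ b lam J' r t x) :
    ∀ t ∈ Set.Icc (0:ℝ) T, ∀ x ≥ (0:ℝ),
      r t x ≤ sSup (r₀ '' Set.Ici 0) * bBar *
        Real.exp (|J' (lamHi / Real.sqrt γ * LL2Norm T γ r)| * lamHi * T) := by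
  obtain ⟨hrpos, hrMeas, hrInt, hrBdd⟩ := hr
  have hsγ : 0 < Real.sqrt γ := Real.sqrt_pos.mpr hγ
  set N := LL2Norm T γ r with hNdef
  have hNle : ∀ s ∈ Set.Icc (0:ℝ) T, L2wNorm γ (r s) ≤ N := fun s hs =>
    le_csSup hrBdd ⟨s, hs, rfl⟩
  have hN0 : 0 ≤ N :=
    le_trans (Real.sqrt_nonneg _) (hNle 0 ⟨le_rfl, hT.le⟩)
  set M := lamHi / Real.sqrt γ * N with hMdef
  have hM0 : 0 ≤ M := mul_nonneg (div_nonneg hlamHi.le hsγ.le) hN0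
  -- the exact value of ∫_{Ioi 0} exp (-γ v)
  have hexpint : ∫ v in Set.Ioi (0:ℝ), Real.exp (-γ * v) = γ⁻¹ := by
    have h := integral_comp_mul_left_Ioi (fun y => Real.exp (-y)) 0 hγ
    simp only [mul_zero] at h
    rw [integral_exp_neg_Ioi_zero, smul_eq_mul, mul_one] at h
    rw [← h]
    refine setIntegral_congr_fun measurableSet_Ioi fun v _ => ?_
    rw [neg_mul]
  -- key bound on the inner integral
  have hinner : ∀ s ∈ Set.Icc (0:ℝ) T, ∀ L ≥ (0:ℝ),
      0 ≤ (∫ v in (0:ℝ)..L, lam s v * r s v) ∧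
        (∫ v in (0:ℝ)..L, lam s v * r s v) ≤ M := by
    intro s hs L hL
    constructor
    · refine intervalIntegral.integral_nonneg hL fun v hv => ?_
      exact mul_nonneg (hlamLo.le.trans (hlam s hs v hv.1).1) (hrpos s v)
    rw [intervalIntegral.integral_of_le hL]
    set f := fun v => r s v * Real.exp (γ * v / 2) with hfdef
    set g := fun v => Real.exp (-(γ * v / 2)) with hgdef
    have hrs_meas : Measurable (r s) := hrMeas.comp measurable_prodMk_left
    have hlams_meas : Measurable (lam s) := hlamMeas.comp measurable_prodMk_left
    have hfsq : ∀ v, f v ^ 2 = (r s v) ^ 2 * Real.exp (γ * v) := by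
      intro v
      rw [hfdef, mul_pow, pow_two (Real.exp _), ← Real.exp_add, add_halves]
    have hgsq : ∀ v, g v ^ 2 = Real.exp (-γ * v) := by
      intro v
      rw [hgdef, pow_two, ← Real.exp_add]
      congr 1; ring
    have hfg : ∀ v, f v * g v = r s v := by
      intro v
      rw [hfdef, hgdef, mul_assoc, ← Real.exp_add, add_neg_cancel, Real.exp_zero, mul_one]
    have hfmem : MemLp f 2 (volume.restrict (Set.Ioc 0 L)) := by
      refine (memLp_two_iff_integrable_sq ?_).mpr ?_
      · exact (hrs_meas.mul
          (Real.measurable_exp.comp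
            ((measurable_const.mul measurable_id).div_const 2))).aestronglyMeasurable
      · have : (fun v => f v ^ 2) = fun v => (r s v) ^ 2 * Real.exp (γ * v) :=
          funext hfsq
        rw [this]
        exact (hrInt s hs).mono_set Set.Ioc_subset_Ioi_self
    have hgmem : MemLp g 2 (volume.restrict (Set.Ioc 0 L)) := by
      have hgm : Measurable g :=
        Real.measurable_exp.comp (((measurable_const.mul measurable_id).div_const 2).neg)
      refine (memLp_two_iff_integrable_sq hgm.aestronglyMeasurable).mpr ?_
      have : (fun v => g v ^ 2) = fun v => Real.exp (-γ * v) := funext hgsq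
      rw [this]
      exact (exp_neg_integrableOn_Ioi 0 hγ).mono_set Set.Ioc_subset_Ioi_self
    have I1 : Integrable (fun v => r s v) (volume.restrict (Set.Ioc 0 L)) := by
      refine (myIntegrableMul hfmem hgmem).congr (Eventually.of_forall hfg)
    have I2 : Integrable (fun v => lam s v * r s v)
        (volume.restrict (Set.Ioc 0 L)) := by
      refine Integrable.mono' (I1.const_mul lamHi)
        ((hlams_meas.mul hrs_meas).aestronglyMeasurable) ?_
      refine (ae_restrict_iff' measurableSet_Ioc).mpr (Eventually.of_forall fun v hv => ?_)
      have h1 := hlam s hs v hv.1.le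
      have h2 := hrpos s v
      rw [Real.norm_eq_abs,
        abs_of_nonneg (mul_nonneg (hlamLo.le.trans h1.1) h2)]
      exact mul_le_mul_of_nonneg_right h1.2 h2
    have hA : ∫ v in Set.Ioc 0 L, (r s v) ^ 2 * Real.exp (γ * v) ≤
        ∫ v in Set.Ioi (0:ℝ), (r s v) ^ 2 * Real.exp (γ * v) := by
      refine setIntegral_mono_set (hrInt s hs)
        (Eventually.of_forall fun v => ?_)
        (HasSubset.Subset.eventuallyLE Set.Ioc_subset_Ioi_self)
      exact mul_nonneg (sq_nonneg _) (Real.exp_pos _).le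
    have hB : ∫ v in Set.Ioc 0 L, Real.exp (-γ * v) ≤ γ⁻¹ := by
      rw [← hexpint]
      refine setIntegral_mono_set (exp_neg_integrableOn_Ioi 0 hγ)
        (Eventually.of_forall fun v => (Real.exp_pos _).le)
        (HasSubset.Subset.eventuallyLE Set.Ioc_subset_Ioi_self)
    calc ∫ v in Set.Ioc 0 L, lam s v * r s v
        ≤ ∫ v in Set.Ioc 0 L, lamHi * r s v := by
          refine setIntegral_mono_on I2 (I1.const_mul lamHi) measurableSet_Ioc
            fun v hv => ?_
          exact mul_le_mul_of_nonneg_right ((hlam s hs v hv.1.le).2) (hrpos s v)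
      _ = lamHi * ∫ v in Set.Ioc 0 L, r s v := by rw [integral_const_mul]
      _ = lamHi * ∫ v in Set.Ioc 0 L, f v * g v := by
          congr 1
          exact setIntegral_congr_fun measurableSet_Ioc fun v _ => (hfg v).symm
      _ ≤ lamHi * (Real.sqrt (∫ v in Set.Ioc 0 L, f v ^ 2) *
            Real.sqrt (∫ v in Set.Ioc 0 L, g v ^ 2)) :=
          mul_le_mul_of_nonneg_left (myCS hfmem hgmem) hlamHi.le
      _ ≤ lamHi * (L2wNorm γ (r s) * Real.sqrt γ⁻¹) := by
          refine mul_le_mul_of_nonneg_left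
            (mul_le_mul ?_ ?_ (Real.sqrt_nonneg _) (Real.sqrt_nonneg _)) hlamHi.le
          · refine Real.sqrt_le_sqrt ?_
            calc ∫ v in Set.Ioc 0 L, f v ^ 2
                = ∫ v in Set.Ioc 0 L, (r s v) ^ 2 * Real.exp (γ * v) :=
                  setIntegral_congr_fun measurableSet_Ioc fun v _ => hfsq v
              _ ≤ _ := hA
          · refine Real.sqrt_le_sqrt ?_
            calc ∫ v in Set.Ioc 0 L, g v ^ 2
                = ∫ v in Set.Ioc 0 L, Real.exp (-γ * v) :=
                  setIntegral_congr_fun measurableSet_Ioc fun v _ => hgsq v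
              _ ≤ γ⁻¹ := hB
      _ ≤ M := by
          rw [hMdef, Real.sqrt_inv]
          have : lamHi * (L2wNorm γ (r s) * (Real.sqrt γ)⁻¹) =
              lamHi / Real.sqrt γ * L2wNorm γ (r s) := by ring
          rw [this]
          exact mul_le_mul_of_nonneg_left (hNle s hs)
            (div_nonneg hlamHi.le hsγ.le)
  -- main argument
  intro t ht x hx
  rw [hfix t ht x hx]
  show r₀ (t + x) * b t x * Real.exp _ ≤ _
  have hS : ∀ y, 0 ≤ y → r₀ y ≤ sSup (r₀ '' Set.Ici 0) := fun y hy =>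
    le_csSup hr₀bdd ⟨y, hy, rfl⟩
  have hS0 : 0 ≤ sSup (r₀ '' Set.Ici 0) :=
    le_trans (hr₀pos 0 le_rfl) (hS 0 le_rfl)
  set C := |J' M| * lamHi with hCdef
  have hC0 : 0 ≤ C := mul_nonneg (abs_nonneg _) hlamHi.le
  have hIb : (∫ s in (0:ℝ)..t,
      J' (∫ v in (0:ℝ)..(t - s + x), lam s v * r s v) * lam s (t - s + x)) ≤ C * T := by
    by_cases hInt : IntervalIntegrable
        (fun s => J' (∫ v in (0:ℝ)..(t - s + x), lam s v * r s v) * lam s (t - s + x))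
        volume 0 t
    · have hpt : ∀ s ∈ Set.Icc (0:ℝ) t,
          J' (∫ v in (0:ℝ)..(t - s + x), lam s v * r s v) * lam s (t - s + x) ≤ C := by
        intro s hsI
        have hsT : s ∈ Set.Icc (0:ℝ) T := ⟨hsI.1, hsI.2.trans ht.2⟩
        have harg : (0:ℝ) ≤ t - s + x := by
          have := hsI.2; linarith
        have hlamb := hlam s hsT _ harg
        have hlam0 : 0 ≤ lam s (t - s + x) := hlamLo.le.trans hlamb.1
        have hIbd := hinner s hsT (t - s + x) harg
        have hJ : J' (∫ v in (0:ℝ)..(t - s + x), lam s v * r s v) ≤ |J' M| :=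
          le_trans (hJmono hIbd.1 hM0 hIbd.2) (le_abs_self _)
        by_cases hJ0 : 0 ≤ J' (∫ v in (0:ℝ)..(t - s + x), lam s v * r s v)
        · exact mul_le_mul hJ hlamb.2 hlam0 (abs_nonneg _)
        · push_neg at hJ0
          exact le_trans (mul_nonpos_of_nonpos_of_nonneg hJ0.le hlam0) hC0
      calc (∫ s in (0:ℝ)..t, _) ≤ ∫ _ in (0:ℝ)..t, C :=
            intervalIntegral.integral_mono_on ht.1 hInt intervalIntegrable_const hpt
        _ = t * C := by simp [hCdef]; ring
        _ ≤ T * C := mul_le_mul_of_nonneg_right ht.2 hC0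
        _ = C * T := mul_comm _ _
    · rw [intervalIntegral.integral_undef hInt]
      exact mul_nonneg hC0 hT.le
  have h1 : r₀ (t + x) * b t x ≤ sSup (r₀ '' Set.Ici 0) * bBar :=
    mul_le_mul (hS _ (by linarith [ht.1])) (hb t ht x hx).2 (hb t ht x hx).1 hS0
  have h2 : Real.exp (∫ s in (0:ℝ)..t,
      J' (∫ v in (0:ℝ)..(t - s + x), lam s v * r s v) * lam s (t - s + x)) ≤
      Real.exp (|J' M| * lamHi * T) := Real.exp_le_exp.mpr hIb
  calc r₀ (t + x) * b t x * Real.exp _ ≤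
      sSup (r₀ '' Set.Ici 0) * bBar * Real.exp (|J' M| * lamHi * T) :=
        mul_le_mul h1 h2 (Real.exp_pos _).le (mul_nonneg hS0 hbBar.le)
    _ = _ := rfl
end

section
/- Let λ̄ > 0, a ∈ ℝ, q ≥ 0, and let ν be a Borel measure on ℝ whose support is contained in (−1/λ̄, ∞) and which satisfies ∫_{(−1/λ̄,1)} y² ν(dy) < ∞ and ∫_{[1,∞)} y ν(dy) < ∞. Define J′(z) := −a + q z + ∫_{(−1/λ̄,1)} y (1 − e^{−zy}) ν(dy) − ∫_{[1,∞)} y e^{−zy} ν(dy) for z > 0. If q > 0 or ν((−1/λ̄, 0)) > 0, then there exist constants a′ > 0 and b′ ∈ ℝ such that J′(z) ≥ a′ (ln z)³ + b′ for all z > 0. -/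
open MeasureTheory Set Filter

lemma aux_log_cube {z : ℝ} (hz : 0 < z) : (Real.log z) ^ 3 ≤ 27 * z := by
  rcases le_or_gt z 1 with h | h
  · have h1 : Real.log z ≤ 0 := Real.log_nonpos hz.le h
    have h2 : (Real.log z) ^ 3 ≤ 0 := Odd.pow_nonpos (by decide) h1
    nlinarith
  · set w := z ^ ((1:ℝ)/3) with hw
    have hwpos : 0 < w := Real.rpow_pos_of_pos hz _
    have hlw : Real.log w = (1/3) * Real.log z := by
      rw [hw, Real.log_rpow hz]
    have h0 : 0 ≤ Real.log z := Real.log_nonneg h.le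
    have h1 : Real.log w ≤ w := (Real.log_le_sub_one_of_pos hwpos).trans (by linarith)
    have hlw0 : 0 ≤ Real.log w := by rw [hlw]; positivity
    have h2 : (Real.log w) ^ 3 ≤ w ^ 3 := pow_le_pow_left₀ hlw0 h1 3
    have h3 : w ^ (3:ℕ) = z := by
      rw [hw, ← Real.rpow_natCast (z ^ ((1:ℝ)/3)) 3, ← Real.rpow_mul hz.le]
      norm_num
    have h4 : (Real.log z) ^ 3 = 27 * (Real.log w) ^ 3 := by rw [hlw]; ring
    rw [h4, ← h3]
    linarith

lemma aux_abs_one_sub_exp (t : ℝ) : |1 - Real.exp t| ≤ |t| * Real.exp |t| := by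
  rcases le_or_gt 0 t with h | h
  · rw [abs_of_nonneg h, abs_sub_comm, abs_of_nonneg (by nlinarith [Real.one_le_exp h] : 0 ≤ Real.exp t - 1)]
    nlinarith [Real.add_one_le_exp (-t), Real.exp_pos t, Real.exp_neg t,
      mul_pos (Real.exp_pos t) (Real.exp_pos (-t)), Real.exp_ne_zero t,
      Real.exp_neg t ▸ mul_inv_cancel₀ (Real.exp_ne_zero t)]
  · rw [abs_of_neg h, abs_of_nonneg (by nlinarith [Real.exp_le_one_iff.mpr h.le] : 0 ≤ 1 - Real.exp t)]
    nlinarith [Real.add_one_le_exp t, Real.one_le_exp (neg_nonneg.mpr h.le), Real.exp_pos t]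

lemma aux_integrand_nonneg {z : ℝ} (hz : 0 < z) (y : ℝ) :
    0 ≤ y * (1 - Real.exp (-z * y)) := by
  rcases le_or_gt 0 y with h | h
  · have : Real.exp (-z * y) ≤ 1 := Real.exp_le_one_iff.mpr (by nlinarith)
    nlinarith
  · have : 1 ≤ Real.exp (-z * y) := Real.one_le_exp (by nlinarith)
    nlinarith

/-- If the Lévy exponent of the noise has a Gaussian part (`q > 0`) or
the Lévy measure charges `(−1/λ̄, 0)`, then `J′(z) ≥ a′ (ln z)³ + b′` for all `z > 0`,
for some `a′ > 0` and `b′ ∈ ℝ`. -/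
theorem Jprime_cubic_log_growth_of_wiener_or_negative_jumps
    (lamBar a q : ℝ) (hlamBar : 0 < lamBar) (hq : 0 ≤ q)
    (ν : MeasureTheory.Measure ℝ)
    (hsupp : ν (Set.Iic (-(1 / lamBar))) = 0)
    (hint1 : MeasureTheory.IntegrableOn (fun y => y ^ 2)
      (Set.Ioo (-(1 / lamBar)) 1) ν)
    (hint2 : MeasureTheory.IntegrableOn (fun y => y) (Set.Ici 1) ν)
    (J' : ℝ → ℝ)
    (hJ : ∀ z > (0:ℝ), J' z = -a + q * z
      + (∫ y in Set.Ioo (-(1 / lamBar)) 1, y * (1 - Real.exp (-z * y)) ∂ν)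
      - ∫ y in Set.Ici 1, y * Real.exp (-z * y) ∂ν)
    (hcase : 0 < q ∨ 0 < ν (Set.Ioo (-(1 / lamBar)) 0)) :
    ∃ a' > (0:ℝ), ∃ b' : ℝ, ∀ z > (0:ℝ),
      a' * (Real.log z) ^ 3 + b' ≤ J' z := by
  set C₂ : ℝ := ∫ y in Set.Ici 1, y ∂ν with hC₂
  -- bound on the big-jumps integral, for every z > 0
  have hI₂ : ∀ z : ℝ, 0 < z →
      (∫ y in Set.Ici 1, y * Real.exp (-z * y) ∂ν) ≤ C₂ := by
    intro z hz
    have hmeas : AEStronglyMeasurable (fun y => y * Real.exp (-z * y))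
        (ν.restrict (Set.Ici 1)) :=
      (Continuous.aestronglyMeasurable (by fun_prop))
    have hintf : IntegrableOn (fun y => y * Real.exp (-z * y)) (Set.Ici 1) ν := by
      refine hint2.mono' hmeas ?_
      filter_upwards [ae_restrict_mem measurableSet_Ici] with y hy
      have hy1 : (1:ℝ) ≤ y := hy
      have he : Real.exp (-z * y) ≤ 1 := Real.exp_le_one_iff.mpr (by nlinarith)
      have hpos : 0 ≤ y * Real.exp (-z * y) :=
        mul_nonneg (by linarith) (Real.exp_pos _).le
      rw [Real.norm_eq_abs, abs_of_nonneg hpos]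
      nlinarith [Real.exp_pos (-z * y)]
    refine setIntegral_mono_on hintf hint2 measurableSet_Ici ?_
    intro y hy
    have hy1 : (1:ℝ) ≤ y := hy
    have he : Real.exp (-z * y) ≤ 1 := Real.exp_le_one_iff.mpr (by nlinarith)
    nlinarith [Real.exp_pos (-z * y)]
  rcases hcase with hqpos | hν
  · -- Gaussian case
    refine ⟨q / 27, by positivity, -a - C₂, fun z hz => ?_⟩
    have hI₁ : 0 ≤ ∫ y in Set.Ioo (-(1 / lamBar)) 1, y * (1 - Real.exp (-z * y)) ∂ν :=
      setIntegral_nonneg measurableSet_Ioo fun y _ => aux_integrand_nonneg hz y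
    have hlog := aux_log_cube hz
    have h1 : q / 27 * (Real.log z) ^ 3 ≤ q / 27 * (27 * z) :=
      mul_le_mul_of_nonneg_left hlog (by positivity)
    rw [hJ z hz]
    have := hI₂ z hz
    nlinarith
  · -- negative-jumps case
    obtain ⟨n, hn⟩ : ∃ n : ℕ, 0 < ν (Set.Ioo (-(1 / lamBar)) (-(1 / ((n:ℝ) + 1)))) := by
      by_contra hcon
      push_neg at hcon
      have hzero : ∀ n : ℕ, ν (Set.Ioo (-(1 / lamBar)) (-(1 / ((n:ℝ) + 1)))) = 0 :=
        fun n => le_antisymm (hcon n) zero_le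
      have hsub : Set.Ioo (-(1 / lamBar)) 0 ⊆
          ⋃ n : ℕ, Set.Ioo (-(1 / lamBar)) (-(1 / ((n:ℝ) + 1))) := by
        intro y hy
        obtain ⟨k, hk⟩ := exists_nat_one_div_lt (neg_pos.mpr hy.2)
        exact Set.mem_iUnion.mpr ⟨k, hy.1, by linarith⟩
      have : ν (Set.Ioo (-(1 / lamBar)) 0) = 0 :=
        le_antisymm ((measure_mono hsub).trans (measure_iUnion_null hzero).le) zero_le
      exact hν.ne' this
    set δ : ℝ := 1 / ((n:ℝ) + 1) with hδdef
    have hδ : 0 < δ := by positivity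
    have hδ1 : δ ≤ 1 := by
      rw [hδdef]
      rw [div_le_one (by positivity)]
      push_cast; linarith [Nat.cast_nonneg (α := ℝ) n]
    set S : Set ℝ := Set.Ioo (-(1 / lamBar)) (-δ) with hSdef
    have hSsub : S ⊆ Set.Ioo (-(1 / lamBar)) 1 := fun y hy => ⟨hy.1, by
      have : y < -δ := hy.2; linarith⟩
    -- ν S is finite
    have hνS_ne : ν S ≠ ⊤ := by
      have h2 : IntegrableOn (fun y => y ^ 2) S ν := hint1.mono_set hSsub
      have hconst : IntegrableOn (fun _ : ℝ => δ ^ 2) S ν := by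
        refine h2.mono' aestronglyMeasurable_const ?_
        filter_upwards [ae_restrict_mem measurableSet_Ioo] with y hy
        have hy2 : y < -δ := hy.2
        rw [Real.norm_eq_abs, abs_of_nonneg (sq_nonneg δ)]
        nlinarith
      rw [IntegrableOn, integrable_const_iff] at hconst
      rcases hconst with h | h
      · exact absurd h (by positivity)
      · have h' := measure_lt_top (ν.restrict S) univ
        rw [Measure.restrict_apply_univ] at h'
        exact h'.ne
    set m : ℝ := (ν S).toReal with hm
    have hmpos : 0 < m := ENNReal.toReal_pos hn.ne' hνS_ne
    refine ⟨m * δ ^ 2 / 27, by positivity, -a - C₂ - m * δ, fun z hz => ?_⟩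
    -- integrability of the small-jumps integrand
    set M : ℝ := max (1 / lamBar) 1 with hM
    have hMpos : 0 < M := lt_max_of_lt_right one_pos
    have hfin : IntegrableOn (fun y => y * (1 - Real.exp (-z * y)))
        (Set.Ioo (-(1 / lamBar)) 1) ν := by
      refine (hint1.const_mul (z * Real.exp (z * M))).mono'
        (Continuous.aestronglyMeasurable (by fun_prop)) ?_
      filter_upwards [ae_restrict_mem measurableSet_Ioo] with y hy
      have habs : |y| ≤ M := by
        rw [abs_le]
        constructor
        · have := hy.1
          have : -(1 / lamBar) ≤ y := this.le
          have hM1 : 1 / lamBar ≤ M := le_max_left _ _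
          linarith
        · exact hy.2.le.trans (le_max_right _ _)
      have h1 : |1 - Real.exp (-z * y)| ≤ |(-z * y)| * Real.exp |(-z * y)| :=
        aux_abs_one_sub_exp (-z * y)
      have h2 : |(-z * y)| = z * |y| := by
        rw [neg_mul, abs_neg, abs_mul, abs_of_pos hz]
      have h3 : Real.exp (z * |y|) ≤ Real.exp (z * M) :=
        Real.exp_le_exp.mpr (mul_le_mul_of_nonneg_left habs hz.le)
      rw [Real.norm_eq_abs, abs_mul]
      calc |y| * |1 - Real.exp (-z * y)|
          ≤ |y| * (z * |y| * Real.exp (z * M)) := by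
            refine mul_le_mul_of_nonneg_left ?_ (abs_nonneg y)
            rw [h2] at h1
            calc |1 - Real.exp (-z * y)| ≤ z * |y| * Real.exp (z * |y|) := h1
              _ ≤ z * |y| * Real.exp (z * M) :=
                mul_le_mul_of_nonneg_left h3 (by positivity)
        _ = z * Real.exp (z * M) * (|y| * |y|) := by ring
        _ = z * Real.exp (z * M) * y ^ 2 := by rw [← abs_mul, ← sq, abs_sq]
    -- lower bound the small-jumps integral by the chunk over S
    have hSstep : δ * (Real.exp (z * δ) - 1) * m ≤
        ∫ y in S, y * (1 - Real.exp (-z * y)) ∂ν := by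
      refine setIntegral_ge_of_const_le_real measurableSet_Ioo hνS_ne ?_ (hfin.mono_set hSsub)
      intro y hy
      have hy2 : y < -δ := hy.2
      have hB : Real.exp (z * δ) ≤ Real.exp (-z * y) :=
        Real.exp_le_exp.mpr (by nlinarith)
      have hC : 1 ≤ Real.exp (z * δ) := Real.one_le_exp (by positivity)
      nlinarith
    have hmono : (∫ y in S, y * (1 - Real.exp (-z * y)) ∂ν) ≤
        ∫ y in Set.Ioo (-(1 / lamBar)) 1, y * (1 - Real.exp (-z * y)) ∂ν := by
      refine setIntegral_mono_set hfin ?_ (HasSubset.Subset.eventuallyLE hSsub)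
      exact Eventually.of_forall fun y => aux_integrand_nonneg hz y
    have hI₂z := hI₂ z hz
    rw [hJ z hz]
    have hqz : 0 ≤ q * z := mul_nonneg hq hz.le
    have hlog := aux_log_cube hz
    have hexp : δ * z ≤ Real.exp (z * δ) := by
      have := Real.add_one_le_exp (z * δ); nlinarith
    have h1 : m * δ ^ 2 / 27 * (Real.log z) ^ 3 ≤ m * δ ^ 2 / 27 * (27 * z) :=
      mul_le_mul_of_nonneg_left hlog (by positivity)
    have h2 : m * δ * (δ * z) ≤ m * δ * Real.exp (z * δ) :=
      mul_le_mul_of_nonneg_left hexp (by positivity)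
    nlinarith
end

section
/- Let a ∈ ℝ and let ν be a Borel measure on (0,∞) with ∫_{(0,1)} y² ν(dy) < ∞ and ∫_{[1,∞)} y ν(dy) < ∞. Define U(x) := ∫_{(0,x]} y² ν(dy) for x > 0 and J′(z) := −a + ∫_{(0,1)} y (1 − e^{−zy}) ν(dy) − ∫_{[1,∞)} y e^{−zy} ν(dy) for z > 0. Suppose there exist ρ > 1 and a function M, positive on some interval (0,δ) and slowly varying at 0, such that U(x) / (x^ρ M(x)) → 1 as x → 0⁺. Then for every C > 0, limsup_{z→∞} ( ln z − C J′(z) ) = +∞. -/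
open MeasureTheory Set Filter

set_option maxHeartbeats 1000000 in
/-- (Tauberian existence criterion, case `ρ > 1`.) If
`U(x) = ∫_{(0,x]} y² ν(dy)` behaves like `x^ρ M(x)` as `x → 0⁺` with `ρ > 1` and `M`
slowly varying at `0`, then the logarithmic growth condition
`limsup_{z→∞}(ln z − C J′(z)) = +∞` holds for every `C > 0`. -/
theorem log_growth_of_tauberian_rho_gt_one
    (a : ℝ) (ν : MeasureTheory.Measure ℝ) (hν : ν (Set.Iic 0) = 0)
    (hint1 : MeasureTheory.IntegrableOn (fun y => y ^ 2) (Set.Ioo 0 1) ν)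
    (hint2 : MeasureTheory.IntegrableOn (fun y => y) (Set.Ici 1) ν)
    (U : ℝ → ℝ) (hU : ∀ x > (0:ℝ), U x = ∫ y in Set.Ioc 0 x, y ^ 2 ∂ν)
    (J' : ℝ → ℝ)
    (hJ : ∀ z > (0:ℝ), J' z = -a
      + (∫ y in Set.Ioo 0 1, y * (1 - Real.exp (-z * y)) ∂ν)
      - ∫ y in Set.Ici 1, y * Real.exp (-z * y) ∂ν)
    (ρ : ℝ) (hρ : 1 < ρ)
    (M : ℝ → ℝ) (δ : ℝ) (hδ : 0 < δ)
    (hMpos : ∀ x ∈ Set.Ioo (0:ℝ) δ, 0 < M x)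
    (hslow : ∀ x > (0:ℝ), Filter.Tendsto (fun t => M (t * x) / M t)
      (nhdsWithin 0 (Set.Ioi 0)) (nhds 1))
    (hUasymp : Filter.Tendsto (fun x => U x / (x ^ ρ * M x))
      (nhdsWithin 0 (Set.Ioi 0)) (nhds 1)) :
    ∀ C > (0:ℝ), ∀ R : ℝ, ∃ᶠ z in Filter.atTop,
      R ≤ Real.log z - C * J' z := by
  -- Set up constants
  set P : ℝ := (2:ℝ) ^ (ρ - 1) with hPdef
  have hP1 : (1:ℝ) < P := by
    rw [hPdef]
    rw [show (1:ℝ) = (2:ℝ) ^ (0:ℝ) by simp]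
    exact Real.rpow_lt_rpow_left_iff one_lt_two |>.2 (by linarith)
  have hP0 : (0:ℝ) < P := lt_trans one_pos hP1
  obtain ⟨r, hr1, hrP⟩ : ∃ r : ℝ, 1 < r ∧ r < P := ⟨(1 + P) / 2, by linarith, by linarith⟩
  have hr0 : (0:ℝ) < r := lt_trans one_pos hr1
  set s : ℝ := r / P with hsdef
  have hs0 : (0:ℝ) < s := div_pos hr0 hP0
  have hs1 : s < 1 := (div_lt_one hP0).2 hrP
  -- ratio bound for M from slow variation with x = 1/2
  obtain ⟨ε₁, hε₁, hratio⟩ :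
      ∃ ε₁ > 0, ∀ t : ℝ, 0 < t → t < ε₁ → M (t * (1/2)) / M t < r := by
    have h := (hslow (1/2) (by norm_num)).eventually_lt_const hr1
    rw [eventually_nhdsWithin_iff, Metric.eventually_nhds_iff] at h
    obtain ⟨e, he, hh⟩ := h
    refine ⟨e, he, fun t ht hte => ?_⟩
    exact hh (by simpa [Real.dist_eq, abs_of_pos ht] using hte) ht
  -- eventual bound for U
  obtain ⟨ε₀, hε₀, hUb⟩ :
      ∃ ε₀ > 0, ∀ x : ℝ, 0 < x → x < ε₀ → U x / (x ^ ρ * M x) < 2 := by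
    have h := hUasymp.eventually_lt_const (by norm_num : (1:ℝ) < 2)
    rw [eventually_nhdsWithin_iff, Metric.eventually_nhds_iff] at h
    obtain ⟨e, he, hh⟩ := h
    refine ⟨e, he, fun t ht hte => ?_⟩
    exact hh (by simpa [Real.dist_eq, abs_of_pos ht] using hte) ht
  -- the small scale ε
  obtain ⟨ε, hε, hεε₀, hεε₁, hεδ, hε1⟩ :
      ∃ ε : ℝ, 0 < ε ∧ ε < ε₀ ∧ ε < ε₁ ∧ ε < δ ∧ ε < 1 := by
    refine ⟨min (min ε₀ ε₁) (min δ 1) / 2, ?_, ?_, ?_, ?_, ?_⟩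
    · exact div_pos (lt_min (lt_min hε₀ hε₁) (lt_min hδ one_pos)) two_pos
    all_goals
      have hm : 0 < min (min ε₀ ε₁) (min δ 1) :=
        lt_min (lt_min hε₀ hε₁) (lt_min hδ one_pos)
      have h2 := div_lt_self hm one_lt_two
    · exact lt_of_lt_of_le h2 (le_trans (min_le_left _ _) (min_le_left _ _))
    · exact lt_of_lt_of_le h2 (le_trans (min_le_left _ _) (min_le_right _ _))
    · exact lt_of_lt_of_le h2 (le_trans (min_le_right _ _) (min_le_left _ _))
    · exact lt_of_lt_of_le h2 (le_trans (min_le_right _ _) (min_le_right _ _))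
  -- properties of the dyadic points
  have hpt : ∀ n : ℕ, 0 < ε / 2 ^ n ∧ ε / 2 ^ n ≤ ε := by
    intro n
    have h2n : (0:ℝ) < 2 ^ n := by positivity
    constructor
    · positivity
    · exact div_le_self hε.le (one_le_pow₀ one_le_two)
  -- M along dyadic points
  have hMkey : ∀ n : ℕ, M (ε / 2 ^ n) ≤ r ^ n * M ε := by
    intro n
    induction n with
    | zero => simp
    | succ m ih =>
      have hpm := hpt m
      have hMm : 0 < M (ε / 2 ^ m) := hMpos _ ⟨hpm.1, lt_of_le_of_lt hpm.2 hεδ⟩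
      have hrat := hratio (ε / 2 ^ m) hpm.1 (lt_of_le_of_lt hpm.2 hεε₁)
      have heq : ε / 2 ^ m * (1/2) = ε / 2 ^ (m+1) := by
        rw [pow_succ]; ring
      rw [heq] at hrat
      have h1 : M (ε / 2 ^ (m+1)) < r * M (ε / 2 ^ m) := by
        rw [div_lt_iff₀ hMm] at hrat; linarith
      have h2 : r * M (ε / 2 ^ m) ≤ r * (r ^ m * M ε) :=
        mul_le_mul_of_nonneg_left ih hr0.le
      calc M (ε / 2 ^ (m+1)) ≤ r * (r ^ m * M ε) := le_trans h1.le h2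
        _ = r ^ (m+1) * M ε := by ring
  -- U along dyadic points
  have hUkey : ∀ n : ℕ, U (ε / 2 ^ n) ≤ 2 * ((ε / 2 ^ n) ^ ρ * M (ε / 2 ^ n)) := by
    intro n
    have hpn := hpt n
    have hMn : 0 < M (ε / 2 ^ n) := hMpos _ ⟨hpn.1, lt_of_le_of_lt hpn.2 hεδ⟩
    have hxρ : 0 < (ε / 2 ^ n) ^ ρ := Real.rpow_pos_of_pos hpn.1 ρ
    have hb := hUb _ hpn.1 (lt_of_le_of_lt hpn.2 hεε₀)
    rw [div_lt_iff₀ (by positivity)] at hb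
    nlinarith
  -- the quantitative geometric bound
  have hgeom : ∀ n : ℕ, (2 ^ (n+1) / ε) * U (ε / 2 ^ n)
      ≤ (4 * ε ^ (ρ - 1) * M ε) * s ^ n := by
    intro n
    have hpn := hpt n
    have h2n : (0:ℝ) < 2 ^ n := by positivity
    -- rewrite (2^n)^ρ = 2^n * P^n
    have hpow : ((2:ℝ) ^ n) ^ ρ = 2 ^ n * P ^ n := by
      rw [← Real.rpow_natCast (2:ℝ) n, ← Real.rpow_natCast P n, hPdef,
        ← Real.rpow_mul (by norm_num : (0:ℝ) ≤ 2),
        ← Real.rpow_mul (by norm_num : (0:ℝ) ≤ 2),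
        ← Real.rpow_add two_pos]
      congr 1
      ring
    have hdiv : (ε / 2 ^ n) ^ ρ = ε ^ ρ / (2 ^ n * P ^ n) := by
      rw [Real.div_rpow hε.le h2n.le, hpow]
    have hεp : ε ^ ρ = ε ^ (ρ - 1) * ε := by
      rw [← Real.rpow_add_one hε.ne' (ρ - 1)]; ring_nf
    have hMε : 0 < M ε := hMpos _ ⟨hε, hεδ⟩
    have step1 : (2 ^ (n+1) / ε) * U (ε / 2 ^ n)
        ≤ (2 ^ (n+1) / ε) * (2 * ((ε / 2 ^ n) ^ ρ * (r ^ n * M ε))) := by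
      have h1 : U (ε / 2 ^ n) ≤ 2 * ((ε / 2 ^ n) ^ ρ * (r ^ n * M ε)) := by
        refine le_trans (hUkey n) ?_
        have hxρ : 0 < (ε / 2 ^ n) ^ ρ := Real.rpow_pos_of_pos hpn.1 ρ
        have := mul_le_mul_of_nonneg_left (hMkey n) hxρ.le
        linarith
      exact mul_le_mul_of_nonneg_left h1 (by positivity)
    refine le_trans step1 (le_of_eq ?_)
    have hPn : (P:ℝ) ^ n ≠ 0 := by positivity
    have h2n' : ((2:ℝ) ^ n) ≠ 0 := h2n.ne'
    rw [hdiv, hεp, hsdef, div_pow, pow_succ]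
    field_simp
    ring
  -- shells
  have hshell : ∀ n : ℕ, (∫⁻ y in Ioc (ε / 2 ^ (n+1)) (ε / 2 ^ n), ENNReal.ofReal y ∂ν)
      ≤ ENNReal.ofReal ((2 ^ (n+1) / ε) * U (ε / 2 ^ n)) := by
    intro n
    have hpn := hpt n
    have hpn1 := hpt (n+1)
    have hc : (0:ℝ) ≤ 2 ^ (n+1) / ε := by positivity
    have step1 : (∫⁻ y in Ioc (ε / 2 ^ (n+1)) (ε / 2 ^ n), ENNReal.ofReal y ∂ν)
        ≤ ∫⁻ y in Ioc (ε / 2 ^ (n+1)) (ε / 2 ^ n),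
            ENNReal.ofReal (2 ^ (n+1) / ε) * ENNReal.ofReal (y ^ 2) ∂ν := by
      apply setLIntegral_mono
      · exact (ENNReal.measurable_ofReal.comp (measurable_id.pow_const 2)).const_mul _
      · intro y hy
        have hy0 : 0 < y := lt_trans hpn1.1 hy.1
        rw [← ENNReal.ofReal_mul hc]
        apply ENNReal.ofReal_le_ofReal
        have h1 : (1:ℝ) ≤ (2 ^ (n+1) / ε) * y := by
          rw [div_mul_eq_mul_div, le_div_iff₀ hε]
          have := hy.1
          rw [div_lt_iff₀ (by positivity : (0:ℝ) < 2 ^ (n+1))] at this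
          nlinarith
        nlinarith
    have step2 : (∫⁻ y in Ioc (ε / 2 ^ (n+1)) (ε / 2 ^ n),
            ENNReal.ofReal (2 ^ (n+1) / ε) * ENNReal.ofReal (y ^ 2) ∂ν)
        = ENNReal.ofReal (2 ^ (n+1) / ε)
          * ∫⁻ y in Ioc (ε / 2 ^ (n+1)) (ε / 2 ^ n), ENNReal.ofReal (y ^ 2) ∂ν := by
      exact lintegral_const_mul _ (ENNReal.measurable_ofReal.comp (measurable_id.pow_const 2))
    have step3 : (∫⁻ y in Ioc (ε / 2 ^ (n+1)) (ε / 2 ^ n), ENNReal.ofReal (y ^ 2) ∂ν)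
        ≤ ∫⁻ y in Ioc 0 (ε / 2 ^ n), ENNReal.ofReal (y ^ 2) ∂ν := by
      apply lintegral_mono_set
      exact Ioc_subset_Ioc_left hpn1.1.le
    have hsub : Ioc 0 (ε / 2 ^ n) ⊆ Ioo 0 1 := fun y hy =>
      ⟨hy.1, lt_of_le_of_lt (le_trans hy.2 hpn.2) hε1⟩
    have hintn : IntegrableOn (fun y => y ^ 2) (Ioc 0 (ε / 2 ^ n)) ν :=
      hint1.mono_set hsub
    have step4 : (∫⁻ y in Ioc 0 (ε / 2 ^ n), ENNReal.ofReal (y ^ 2) ∂ν)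
        = ENNReal.ofReal (U (ε / 2 ^ n)) := by
      rw [hU _ hpn.1]
      exact (ofReal_integral_eq_lintegral_ofReal hintn
        (ae_of_all _ fun y => sq_nonneg y)).symm
    calc (∫⁻ y in Ioc (ε / 2 ^ (n+1)) (ε / 2 ^ n), ENNReal.ofReal y ∂ν)
        ≤ ENNReal.ofReal (2 ^ (n+1) / ε)
          * ∫⁻ y in Ioc (ε / 2 ^ (n+1)) (ε / 2 ^ n), ENNReal.ofReal (y ^ 2) ∂ν := by
          rw [← step2]; exact step1
      _ ≤ ENNReal.ofReal (2 ^ (n+1) / ε) * ENNReal.ofReal (U (ε / 2 ^ n)) := by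
          rw [← step4]; exact mul_le_mul_right step3 _
      _ = ENNReal.ofReal ((2 ^ (n+1) / ε) * U (ε / 2 ^ n)) := (ENNReal.ofReal_mul hc).symm
  -- covering of (0, ε) by the shells
  have hcover : Ioo (0:ℝ) ε ⊆ ⋃ n : ℕ, Ioc (ε / 2 ^ (n+1)) (ε / 2 ^ n) := by
    intro y hy
    have hy0 : 0 < y := hy.1
    have hex : ∃ n : ℕ, ε / 2 ^ (n+1) < y := by
      obtain ⟨n, hn⟩ := pow_unbounded_of_one_lt (ε / y) (one_lt_two (α := ℝ))
      refine ⟨n, ?_⟩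
      rw [div_lt_iff₀ (by positivity : (0:ℝ) < 2 ^ (n+1))]
      rw [div_lt_iff₀ hy0] at hn
      have : (2:ℝ) ^ n ≤ 2 ^ (n+1) := by
        apply pow_le_pow_right₀ (by norm_num) (by omega)
      nlinarith
    classical
    have hn1 : ε / 2 ^ (Nat.find hex + 1) < y := Nat.find_spec hex
    have hn2 : y ≤ ε / 2 ^ (Nat.find hex) := by
      rcases Nat.eq_zero_or_pos (Nat.find hex) with h0 | hpos
      · rw [h0, pow_zero, div_one]; exact hy.2.le
      · have hlt : Nat.find hex - 1 < Nat.find hex := Nat.sub_lt hpos one_pos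
        have hmin := Nat.find_min hex hlt
        have heq : Nat.find hex - 1 + 1 = Nat.find hex := by omega
        rw [heq] at hmin
        push_neg at hmin
        exact hmin
    exact mem_iUnion.2 ⟨Nat.find hex, hn1, hn2⟩
  -- finiteness of the lintegral on (0, ε)
  have htot : (∫⁻ y in Ioo (0:ℝ) ε, ENNReal.ofReal y ∂ν) < ⊤ := by
    set c : ℝ := 4 * ε ^ (ρ - 1) * M ε with hcdef
    have hc0 : 0 ≤ c := by
      have hMε : 0 < M ε := hMpos _ ⟨hε, hεδ⟩
      have : (0:ℝ) < ε ^ (ρ - 1) := Real.rpow_pos_of_pos hε _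
      positivity
    calc (∫⁻ y in Ioo (0:ℝ) ε, ENNReal.ofReal y ∂ν)
        ≤ ∫⁻ y in ⋃ n : ℕ, Ioc (ε / 2 ^ (n+1)) (ε / 2 ^ n), ENNReal.ofReal y ∂ν :=
          lintegral_mono_set hcover
      _ ≤ ∑' n : ℕ, ∫⁻ y in Ioc (ε / 2 ^ (n+1)) (ε / 2 ^ n), ENNReal.ofReal y ∂ν :=
          lintegral_iUnion_le _ _
      _ ≤ ∑' n : ℕ, ENNReal.ofReal (c * s ^ n) := by
          apply ENNReal.tsum_le_tsum
          intro n
          exact le_trans (hshell n) (ENNReal.ofReal_le_ofReal (hgeom n))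
      _ = ENNReal.ofReal c * ∑' n : ℕ, (ENNReal.ofReal s) ^ n := by
          rw [ENNReal.tsum_mul_left.symm]
          congr 1
          ext n
          rw [ENNReal.ofReal_mul hc0, ENNReal.ofReal_pow hs0.le]
      _ < ⊤ := by
          rw [ENNReal.tsum_geometric]
          apply ENNReal.mul_lt_top ENNReal.ofReal_lt_top
          rw [ENNReal.inv_lt_top]
          exact tsub_pos_of_lt (by
            rw [← ENNReal.ofReal_one]
            exact ENNReal.ofReal_lt_ofReal_iff_of_nonneg hs0.le |>.2 hs1)
  -- integrability of y on (0, ε)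
  have int_small : IntegrableOn (fun y => y) (Ioo 0 ε) ν := by
    constructor
    · exact aestronglyMeasurable_id
    · rw [HasFiniteIntegral]
      calc (∫⁻ y in Ioo (0:ℝ) ε, ‖y‖₊ ∂ν)
          = ∫⁻ y in Ioo (0:ℝ) ε, ENNReal.ofReal y ∂ν := by
            apply setLIntegral_congr_fun measurableSet_Ioo
            exact fun y hy => Real.enorm_eq_ofReal hy.1.le
        _ < ⊤ := htot
  -- integrability of y on [ε, 1)
  have int_mid : IntegrableOn (fun y => y) (Ico ε 1) ν := by
    have hsub : Ico ε 1 ⊆ Ioo 0 1 := fun y hy => ⟨lt_of_lt_of_le hε hy.1, hy.2⟩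
    have hg : IntegrableOn (fun y => y ^ 2 / ε) (Ico ε 1) ν :=
      (hint1.mono_set hsub).div_const ε
    refine MeasureTheory.Integrable.mono hg measurable_id.aestronglyMeasurable ?_
    rw [ae_restrict_iff' measurableSet_Ico]
    apply ae_of_all
    intro y hy
    have hy0 : 0 < y := lt_of_lt_of_le hε hy.1
    have h1 : y ≤ y ^ 2 / ε := by
      rw [le_div_iff₀ hε]; nlinarith [hy.1]
    rw [Real.norm_eq_abs, Real.norm_eq_abs, abs_of_pos hy0,
      abs_of_nonneg (by positivity : (0:ℝ) ≤ y ^ 2 / ε)]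
    exact h1
  -- integrability of y on (0, 1)
  have int01 : IntegrableOn (fun y => y) (Ioo 0 1) ν := by
    apply (int_small.union int_mid).mono_set
    intro y hy
    rcases lt_or_ge y ε with h | h
    · exact Or.inl ⟨hy.1, h⟩
    · exact Or.inr ⟨h, hy.2⟩
  set K : ℝ := ∫ y in Ioo (0:ℝ) 1, y ∂ν with hKdef
  -- the first integral is bounded by K
  have hI1 : ∀ z : ℝ, 0 < z →
      (∫ y in Ioo (0:ℝ) 1, y * (1 - Real.exp (-z * y)) ∂ν) ≤ K := by
    intro z hz
    apply integral_mono_of_nonneg _ int01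
    all_goals
      exact (ae_restrict_iff' measurableSet_Ioo).2 (ae_of_all _ fun y hy => by
        have h1 : Real.exp (-z * y) ≤ 1 := by
          rw [Real.exp_le_one_iff]; nlinarith [hy.1]
        have h0 : 0 < Real.exp (-z * y) := Real.exp_pos _
        simp only [Pi.zero_apply]
        nlinarith [hy.1, mul_pos hy.1 h0])
  -- the second integral is nonnegative
  have hI2 : ∀ z : ℝ, 0 ≤ ∫ y in Ici (1:ℝ), y * Real.exp (-z * y) ∂ν := by
    intro z
    apply setIntegral_nonneg measurableSet_Ici
    intro y hy
    exact mul_nonneg (by linarith [mem_Ici.1 hy]) (Real.exp_pos _).le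
  -- J' is bounded above
  have hJle : ∀ z : ℝ, 0 < z → J' z ≤ -a + K := by
    intro z hz
    rw [hJ z hz]
    linarith [hI1 z hz, hI2 z]
  -- conclusion
  intro C hC R
  rw [Filter.frequently_atTop]
  intro b
  refine ⟨max b (max 1 (Real.exp (R + C * (-a + K)))), le_max_left _ _, ?_⟩
  set z := max b (max 1 (Real.exp (R + C * (-a + K)))) with hzdef
  have hz1 : (1:ℝ) ≤ z := le_trans (le_max_left _ _) (le_max_right _ _)
  have hz0 : (0:ℝ) < z := lt_of_lt_of_le one_pos hz1
  have hlog : R + C * (-a + K) ≤ Real.log z := by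
    rw [← Real.log_exp (R + C * (-a + K))]
    exact Real.log_le_log (Real.exp_pos _)
      (le_trans (le_max_right _ _) (le_max_right _ _))
  have hJz := hJle z hz0
  have : C * J' z ≤ C * (-a + K) := mul_le_mul_of_nonneg_left hJz hC.le
  linarith
end

section
/- Let a ∈ ℝ and let ν be a Borel measure on (0,∞) with ∫_{(0,1)} y² ν(dy) < ∞ and ∫_{[1,∞)} y ν(dy) < ∞. Define U(x) := ∫_{(0,x]} y² ν(dy) for x > 0 and J′(z) := −a + ∫_{(0,1)} y (1 − e^{−zy}) ν(dy) − ∫_{[1,∞)} y e^{−zy} ν(dy) for z > 0. Suppose there exist ρ with 0 < ρ < 1 and a function M, positive on some interval (0,δ) and slowly varying at 0, such that U(x) / (x^ρ M(x)) → 1 as x → 0⁺. Then there exist constants a′ > 0 and b′ ∈ ℝ such that J′(z) ≥ a′ (ln z)³ + b′ for all z > 0. -/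
open MeasureTheory Set Filter

lemma aux_exp_neg_le (u : ℝ) (h0 : 0 ≤ u) (h1 : u ≤ 1) : Real.exp (-u) ≤ 1 - u/2 := by
  have h2 : (1:ℝ) + u ≤ Real.exp u := by
    have := Real.add_one_le_exp u; linarith
  have h3 : Real.exp (-u) = (Real.exp u)⁻¹ := Real.exp_neg u
  have h4 : (Real.exp u)⁻¹ ≤ (1+u)⁻¹ := inv_anti₀ (by linarith) h2
  have h5 : (1+u)⁻¹ ≤ 1 - u/2 := by
    rw [inv_le_iff_one_le_mul₀ (by linarith)]
    nlinarith
  linarith [h3 ▸ h4]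

lemma aux_one_sub_exp_le (v : ℝ) : 1 - Real.exp (-v) ≤ v := by
  have := Real.add_one_le_exp (-v); linarith

lemma aux_exp_le_one (v : ℝ) (h0 : 0 ≤ v) : Real.exp (-v) ≤ 1 :=
  Real.exp_le_one_iff.mpr (by linarith)

lemma aux_pow_rpow_comm (x β : ℝ) (hx : 0 ≤ x) (m : ℕ) : (x^m)^β = (x^β)^m := by
  rw [← Real.rpow_natCast x m, ← Real.rpow_mul hx, mul_comm, Real.rpow_mul hx,
    Real.rpow_natCast]

lemma aux_cube_mono {x y : ℝ} (h : x ≤ y) : x^3 ≤ y^3 := by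
  nlinarith [sq_nonneg (x+y), sq_nonneg x, sq_nonneg y, sq_nonneg (x-y)]

set_option maxHeartbeats 2000000 in
/-- (Tauberian explosion criterion, case `ρ < 1`.) If
`U(x) = ∫_{(0,x]} y² ν(dy)` behaves like `x^ρ M(x)` as `x → 0⁺` with `0 < ρ < 1` and `M`
slowly varying at `0`, then `J′(z) ≥ a′ (ln z)³ + b′` for all `z > 0`, for some
`a′ > 0` and `b′ ∈ ℝ`. -/
theorem Jprime_cubic_log_growth_of_tauberian_rho_lt_one
    (a : ℝ) (ν : MeasureTheory.Measure ℝ) (hν : ν (Set.Iic 0) = 0)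
    (hint1 : MeasureTheory.IntegrableOn (fun y => y ^ 2) (Set.Ioo 0 1) ν)
    (hint2 : MeasureTheory.IntegrableOn (fun y => y) (Set.Ici 1) ν)
    (U : ℝ → ℝ) (hU : ∀ x > (0:ℝ), U x = ∫ y in Set.Ioc 0 x, y ^ 2 ∂ν)
    (J' : ℝ → ℝ)
    (hJ : ∀ z > (0:ℝ), J' z = -a
      + (∫ y in Set.Ioo 0 1, y * (1 - Real.exp (-z * y)) ∂ν)
      - ∫ y in Set.Ici 1, y * Real.exp (-z * y) ∂ν)
    (ρ : ℝ) (hρ0 : 0 < ρ) (hρ1 : ρ < 1)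
    (M : ℝ → ℝ) (δ : ℝ) (hδ : 0 < δ)
    (hMpos : ∀ x ∈ Set.Ioo (0:ℝ) δ, 0 < M x)
    (hslow : ∀ x > (0:ℝ), Filter.Tendsto (fun t => M (t * x) / M t)
      (nhdsWithin 0 (Set.Ioi 0)) (nhds 1))
    (hUasymp : Filter.Tendsto (fun x => U x / (x ^ ρ * M x))
      (nhdsWithin 0 (Set.Ioi 0)) (nhds 1)) :
    ∃ a' > (0:ℝ), ∃ b' : ℝ, ∀ z > (0:ℝ),
      a' * (Real.log z) ^ 3 + b' ≤ J' z := by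
  set I : ℝ := ∫ y in Set.Ici 1, y ∂ν with hIdef
  -- integrability of the tail integrand
  have intT : ∀ z : ℝ, 0 < z →
      IntegrableOn (fun y => y * Real.exp (-z * y)) (Set.Ici 1) ν := by
    intro z hz0
    apply Integrable.mono hint2
    · exact (Continuous.aestronglyMeasurable (by fun_prop))
    · apply ae_restrict_of_forall_mem measurableSet_Ici
      intro y hy
      have hy1 : (1:ℝ) ≤ y := hy
      have h1 : Real.exp (-z * y) ≤ 1 := by
        rw [neg_mul]; exact aux_exp_le_one _ (by positivity)
      have h2 : 0 < Real.exp (-z * y) := Real.exp_pos _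
      rw [Real.norm_eq_abs, Real.norm_eq_abs, abs_of_nonneg (by nlinarith),
        abs_of_nonneg (by linarith)]
      nlinarith
  -- the tail integral is at most I
  have hTle : ∀ z : ℝ, 0 < z →
      (∫ y in Set.Ici 1, y * Real.exp (-z * y) ∂ν) ≤ I := by
    intro z hz0
    apply setIntegral_mono_on (intT z hz0) hint2 measurableSet_Ici
    intro y hy
    have hy1 : (1:ℝ) ≤ y := hy
    have h1 : Real.exp (-z * y) ≤ 1 := by
      rw [neg_mul]; exact aux_exp_le_one _ (by positivity)
    nlinarith [Real.exp_pos (-z*y)]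
  -- integrability of the middle integrand
  have intG : ∀ z : ℝ, 0 < z →
      IntegrableOn (fun y => y * (1 - Real.exp (-z * y))) (Set.Ioo 0 1) ν := by
    intro z hz0
    apply Integrable.mono (hint1.const_mul z)
    · exact (Continuous.aestronglyMeasurable (by fun_prop))
    · apply ae_restrict_of_forall_mem measurableSet_Ioo
      intro y hy
      have hy0 : 0 < y := hy.1
      have h1 : 0 ≤ 1 - Real.exp (-z * y) := by
        rw [neg_mul]
        have := aux_exp_le_one (z*y) (by positivity); linarith
      have h2 : 1 - Real.exp (-z * y) ≤ z * y := by
        rw [neg_mul]; exact aux_one_sub_exp_le _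
      rw [Real.norm_eq_abs, Real.norm_eq_abs, abs_of_nonneg (by positivity),
        abs_of_nonneg (by positivity)]
      nlinarith
  -- the middle integral is nonnegative
  have hGnonneg : ∀ z : ℝ, 0 < z →
      0 ≤ ∫ y in Set.Ioo 0 1, y * (1 - Real.exp (-z * y)) ∂ν := by
    intro z hz0
    apply setIntegral_nonneg measurableSet_Ioo
    intro y hy
    have h1 := aux_exp_le_one (z*y) (mul_nonneg hz0.le hy.1.le)
    have h2 : 0 ≤ 1 - Real.exp (-z * y) := by rw [neg_mul]; linarith
    nlinarith [hy.1]
  -- basic lower bound for J'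
  have hJlow : ∀ z : ℝ, 0 < z →
      -a - I + (∫ y in Set.Ioo 0 1, y * (1 - Real.exp (-z * y)) ∂ν) ≤ J' z := by
    intro z hz0
    rw [hJ z hz0]
    have := hTle z hz0
    linarith
  have hJlow0 : ∀ z : ℝ, 0 < z → -a - I ≤ J' z := by
    intro z hz0
    have := hJlow z hz0
    have := hGnonneg z hz0
    linarith
  -- key estimate: middle integral ≥ (z/2) U(1/z) for z ≥ 2
  have hGlow : ∀ z : ℝ, 2 ≤ z →
      (z/2) * U z⁻¹ ≤ ∫ y in Set.Ioo 0 1, y * (1 - Real.exp (-z * y)) ∂ν := by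
    intro z hz2
    have hz0 : (0:ℝ) < z := by linarith
    have hzinv : z⁻¹ ≤ 1/2 := by
      rw [inv_le_comm₀ hz0 (by norm_num)]; linarith
    have hsub : Set.Ioc 0 z⁻¹ ⊆ Set.Ioo 0 1 := fun y hy =>
      ⟨hy.1, lt_of_le_of_lt (hy.2.trans hzinv) (by norm_num)⟩
    have intf := intG z hz0
    have step1 : ∫ y in Set.Ioc 0 z⁻¹, (z/2) * y^2 ∂ν
        ≤ ∫ y in Set.Ioc 0 z⁻¹, y * (1 - Real.exp (-z * y)) ∂ν := by
      apply setIntegral_mono_on ((hint1.mono_set hsub).const_mul _)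
        (intf.mono_set hsub) measurableSet_Ioc
      intro y hy
      have hy0 : 0 < y := hy.1
      have hu1 : z * y ≤ 1 := by
        have h := hy.2
        calc z * y ≤ z * z⁻¹ := by
              apply mul_le_mul_of_nonneg_left h hz0.le
          _ = 1 := mul_inv_cancel₀ hz0.ne'
      have hb := aux_exp_neg_le (z*y) (by positivity) hu1
      rw [neg_mul]
      nlinarith
    have step2 : ∫ y in Set.Ioc 0 z⁻¹, y * (1 - Real.exp (-z * y)) ∂ν
        ≤ ∫ y in Set.Ioo 0 1, y * (1 - Real.exp (-z * y)) ∂ν := by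
      apply setIntegral_mono_set intf
      · apply ae_restrict_of_forall_mem measurableSet_Ioo
        intro y hy
        show (0:ℝ) ≤ y * (1 - Real.exp (-z * y))
        have h1 := aux_exp_le_one (z*y) (mul_nonneg hz0.le hy.1.le)
        have h2 : 0 ≤ 1 - Real.exp (-z * y) := by rw [neg_mul]; linarith
        nlinarith [hy.1]
      · exact HasSubset.Subset.eventuallyLE hsub
    have heq : ∫ y in Set.Ioc 0 z⁻¹, (z/2) * y^2 ∂ν = (z/2) * U z⁻¹ := by
      rw [hU z⁻¹ (by positivity), MeasureTheory.integral_const_mul]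
    linarith
  -- monotonicity of U
  have hUmono : ∀ s t : ℝ, 0 < s → s ≤ t → t < 1 → U s ≤ U t := by
    intro s t hs hst ht1
    have hs1 : Set.Ioc 0 t ⊆ Set.Ioo 0 1 := fun y hy => ⟨hy.1, lt_of_le_of_lt hy.2 ht1⟩
    rw [hU s hs, hU t (lt_of_lt_of_le hs hst)]
    apply setIntegral_mono_set (hint1.mono_set hs1)
    · exact Filter.Eventually.of_forall (fun y => by positivity)
    · exact HasSubset.Subset.eventuallyLE (Set.Ioc_subset_Ioc_right hst)
  -- regular variation setup
  set β : ℝ := (1+ρ)/2 with hβdef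
  have hβpos : 0 < β := by rw [hβdef]; linarith
  have hβ1 : β < 1 := by rw [hβdef]; linarith
  have hρβ : ρ < β := by rw [hβdef]; linarith
  set κ : ℝ := (1/2:ℝ) ^ (β - ρ) with hκdef
  have hκ0 : 0 < κ := Real.rpow_pos_of_pos (by norm_num) _
  have hκ1 : κ < 1 := Real.rpow_lt_one (by norm_num) (by norm_num) (by linarith)
  set ε : ℝ := (1-κ)/4 with hεdef
  have hε0 : 0 < ε := by rw [hεdef]; linarith
  have hε1 : ε < 1 := by rw [hεdef]; linarith
  have hκε : κ * (1+ε) ≤ (1-ε)^2 := by rw [hεdef]; nlinarith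
  -- eventual bounds near 0
  have e1 : ∀ᶠ t in nhdsWithin 0 (Set.Ioi 0), |U t / (t ^ ρ * M t) - 1| < ε := by
    have := Metric.tendsto_nhds.mp hUasymp ε hε0
    simpa [Real.dist_eq] using this
  have e2 : ∀ᶠ t in nhdsWithin 0 (Set.Ioi 0), |M (t * (1/2)) / M t - 1| < ε := by
    have := Metric.tendsto_nhds.mp (hslow (1/2) (by norm_num)) ε hε0
    simpa [Real.dist_eq] using this
  obtain ⟨η, hη, hsubη⟩ := mem_nhdsGT_iff_exists_Ioc_subset.mp (e1.and e2)
  have hη0 : (0:ℝ) < η := hη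
  set t₀ : ℝ := min η (min (1/2) (δ/2)) with ht₀def
  have ht₀pos : 0 < t₀ := by
    apply lt_min hη0; apply lt_min <;> [norm_num; linarith]
  have ht₀η : t₀ ≤ η := min_le_left _ _
  have ht₀half : t₀ ≤ 1/2 := le_trans (min_le_right _ _) (min_le_left _ _)
  have ht₀δ : t₀ ≤ δ/2 := le_trans (min_le_right _ _) (min_le_right _ _)
  -- pointwise consequences on (0, t₀]
  have hbounds : ∀ t ∈ Set.Ioc (0:ℝ) t₀,
      (1-ε) * (t ^ ρ * M t) < U t ∧ U t < (1+ε) * (t ^ ρ * M t)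
        ∧ (1-ε) * M t < M (t/2) ∧ 0 < M t := by
    intro t ht
    have ht0 : 0 < t := ht.1
    have htδ : t < δ := by have := ht.2; linarith [ht₀δ]
    have hMt : 0 < M t := hMpos t ⟨ht0, htδ⟩
    have hD : 0 < t ^ ρ * M t := mul_pos (Real.rpow_pos_of_pos ht0 ρ) hMt
    obtain ⟨ha1, ha2⟩ := hsubη ⟨ht0, le_trans ht.2 ht₀η⟩
    rw [abs_sub_lt_iff] at ha1 ha2
    constructor
    · exact (lt_div_iff₀ hD).mp (by linarith [ha1.2])
    constructor
    · exact (div_lt_iff₀ hD).mp (by linarith [ha1.1])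
    constructor
    · have h2 : 1 - ε < M (t * (1/2)) / M t := by linarith [ha2.2]
      have := (lt_div_iff₀ hMt).mp h2
      rw [show t * (1/2) = t/2 by ring] at this
      linarith
    · exact hMt
  have hUpos : ∀ t ∈ Set.Ioc (0:ℝ) t₀, 0 < U t := by
    intro t ht
    obtain ⟨h1, _, _, hMt⟩ := hbounds t ht
    have hD : 0 < t ^ ρ * M t := mul_pos (Real.rpow_pos_of_pos ht.1 ρ) hMt
    nlinarith
  -- halving inequality
  have key : ∀ t ∈ Set.Ioc (0:ℝ) t₀, (1/2:ℝ)^β * U t ≤ U (t/2) := by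
    intro t ht
    have ht0 : 0 < t := ht.1
    have ht2 : t/2 ∈ Set.Ioc (0:ℝ) t₀ := ⟨by linarith, by linarith [ht.2]⟩
    obtain ⟨hU1, hU2, hM2, hMt⟩ := hbounds t ht
    obtain ⟨hU3, _, _, hMt2⟩ := hbounds (t/2) ht2
    set p : ℝ := (1/2:ℝ) ^ ρ with hpdef
    have hp0 : 0 < p := Real.rpow_pos_of_pos (by norm_num) _
    have htρ : 0 < t ^ ρ := Real.rpow_pos_of_pos ht0 ρ
    have heq : (t/2) ^ ρ = t ^ ρ * p := by
      rw [show t/2 = t * (1/2) by ring, Real.mul_rpow ht0.le (by norm_num)]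
    have hβeq : (1/2:ℝ)^β = p * κ := by
      rw [hpdef, hκdef, ← Real.rpow_add (by norm_num)]; ring_nf
    set A : ℝ := t ^ ρ * M t with hAdef
    have hA0 : 0 < A := mul_pos htρ hMt
    have hB : p * ((1-ε) * A) ≤ (t/2) ^ ρ * M (t/2) := by
      rw [heq]
      calc p * ((1-ε) * A) = t ^ ρ * p * ((1-ε) * M t) := by rw [hAdef]; ring
        _ ≤ t ^ ρ * p * M (t/2) := by
            apply mul_le_mul_of_nonneg_left hM2.le (by positivity)
    rw [hβeq]
    have g1 := mul_le_mul_of_nonneg_left hB (by linarith : (0:ℝ) ≤ 1-ε)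
    have g3 := mul_le_mul_of_nonneg_right hκε (mul_pos hp0 hA0).le
    have g4 := mul_le_mul_of_nonneg_left hU2.le (mul_pos hκ0 hp0).le
    linarith [g1, g3, g4, hU3]
  -- dyadic lower bound
  have hdy : ∀ n : ℕ, ((1/2:ℝ)^β)^n * U t₀ ≤ U (t₀ * (1/2)^n) := by
    intro n
    induction n with
    | zero => simp
    | succ n ih =>
      have hmem : t₀ * (1/2)^n ∈ Set.Ioc (0:ℝ) t₀ := by
        constructor
        · positivity
        · have hp1 : (1/2:ℝ)^n ≤ 1 := pow_le_one₀ (by norm_num) (by norm_num)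
          nlinarith
      have hk := key _ hmem
      have hq0 : (0:ℝ) < (1/2:ℝ)^β := Real.rpow_pos_of_pos (by norm_num) _
      calc ((1/2:ℝ)^β)^(n+1) * U t₀ = (1/2:ℝ)^β * (((1/2:ℝ)^β)^n * U t₀) := by ring
        _ ≤ (1/2:ℝ)^β * U (t₀ * (1/2)^n) := by
            apply mul_le_mul_of_nonneg_left ih hq0.le
        _ ≤ U ((t₀ * (1/2)^n)/2) := hk
        _ = U (t₀ * (1/2)^(n+1)) := by
            rw [show (t₀ * (1/2:ℝ)^n)/2 = t₀ * (1/2)^(n+1) by ring]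
  -- power lower bound for U
  set c : ℝ := (1/2:ℝ)^β * U t₀ / t₀ ^ β with hcdef
  have hUt₀ : 0 < U t₀ := hUpos t₀ ⟨ht₀pos, le_refl _⟩
  have ht₀β : 0 < t₀ ^ β := Real.rpow_pos_of_pos ht₀pos β
  have hq0 : (0:ℝ) < (1/2:ℝ)^β := Real.rpow_pos_of_pos (by norm_num) _
  have hc0 : 0 < c := by rw [hcdef]; positivity
  have hlow : ∀ t ∈ Set.Ioc (0:ℝ) t₀, c * t ^ β ≤ U t := by
    intro t ht
    obtain ⟨ht0, htle⟩ := ht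
    have hex : ∃ n : ℕ, (1/2:ℝ)^n < t/t₀ :=
      exists_pow_lt_of_lt_one (div_pos ht0 ht₀pos) (by norm_num)
    have hN1 : (1/2:ℝ)^(Nat.find hex) < t/t₀ := Nat.find_spec hex
    have hNne : Nat.find hex ≠ 0 := by
      intro h
      rw [h, pow_zero] at hN1
      have : t/t₀ ≤ 1 := div_le_one_of_le₀ htle ht₀pos.le
      linarith
    obtain ⟨m, hm⟩ := Nat.exists_eq_succ_of_ne_zero hNne
    have hm2 : ¬ ((1/2:ℝ)^m < t/t₀) := Nat.find_min hex (by omega)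
    push_neg at hm2
    rw [hm] at hN1
    have hge : t₀ * (1/2:ℝ)^(m+1) ≤ t := by
      have h' : t₀ * (1/2:ℝ)^(m+1) < t₀ * (t/t₀) :=
        mul_lt_mul_of_pos_left hN1 ht₀pos
      have h'' : t₀ * (t/t₀) = t := by field_simp
      linarith
    have h1 := hdy (m+1)
    have h2 : U (t₀ * (1/2:ℝ)^(m+1)) ≤ U t :=
      hUmono _ _ (by positivity) hge (by linarith [ht₀half])
    have h3 : t ^ β ≤ t₀ ^ β * ((1/2:ℝ)^β)^m := by
      have hta : t ≤ t₀ * (1/2:ℝ)^m := by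
        have h' := (div_le_iff₀ ht₀pos).mp hm2
        nlinarith [h']
      calc t ^ β ≤ (t₀ * (1/2:ℝ)^m) ^ β :=
            Real.rpow_le_rpow ht0.le hta hβpos.le
        _ = t₀ ^ β * ((1/2:ℝ)^m) ^ β := Real.mul_rpow ht₀pos.le (by positivity)
        _ = t₀ ^ β * ((1/2:ℝ)^β)^m := by rw [aux_pow_rpow_comm _ _ (by norm_num)]
    calc c * t ^ β ≤ c * (t₀ ^ β * ((1/2:ℝ)^β)^m) :=
          mul_le_mul_of_nonneg_left h3 hc0.le
      _ = ((1/2:ℝ)^β)^(m+1) * U t₀ := by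
          rw [hcdef]; field_simp; ring
      _ ≤ U (t₀ * (1/2:ℝ)^(m+1)) := h1
      _ ≤ U t := h2
  -- cubic log domination
  set γ : ℝ := 1 - β with hγdef
  have hγ0 : 0 < γ := by rw [hγdef]; linarith
  have littleo := isLittleO_log_rpow_rpow_atTop (3:ℝ) hγ0
  have hev : ∀ᶠ z in atTop, (Real.log z)^3 ≤ (c/2) * z ^ γ := by
    have h := littleo.def (show (0:ℝ) < c/2 by positivity)
    filter_upwards [h, eventually_ge_atTop (1:ℝ)] with z hz hz1
    have hlz : 0 ≤ Real.log z := Real.log_nonneg hz1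
    have hzpos : (0:ℝ) < z := by linarith
    rw [Real.norm_eq_abs, Real.norm_eq_abs] at hz
    have e3 : Real.log z ^ (3:ℝ) = (Real.log z)^3 := by
      rw [show (3:ℝ) = ((3:ℕ):ℝ) by norm_num, Real.rpow_natCast]
    rw [e3, abs_of_nonneg (by positivity), abs_of_nonneg (by positivity)] at hz
    exact hz
  obtain ⟨z₁, hz₁⟩ := eventually_atTop.mp
    (hev.and ((eventually_ge_atTop (2:ℝ)).and (eventually_ge_atTop t₀⁻¹)))
  set Z : ℝ := max z₁ 2 with hZdef
  have hZ2 : (2:ℝ) ≤ Z := le_max_right _ _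
  have hZz₁ : z₁ ≤ Z := le_max_left _ _
  have hZspec : ∀ z ≥ Z, (Real.log z)^3 ≤ (c/2) * z ^ γ ∧ 2 ≤ z ∧ t₀⁻¹ ≤ z := by
    intro z hz
    exact hz₁ z (le_trans hZz₁ hz)
  refine ⟨1, one_pos, -a - I - (Real.log Z)^3, ?_⟩
  intro z hz0
  rcases le_or_gt z Z with hcase | hcase
  · have hlog : Real.log z ≤ Real.log Z := Real.log_le_log hz0 hcase
    have hcube := aux_cube_mono hlog
    have := hJlow0 z hz0
    linarith
  · obtain ⟨hc1, hc2, hc3⟩ := hZspec z hcase.le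
    have hzinv : z⁻¹ ∈ Set.Ioc (0:ℝ) t₀ := by
      constructor
      · positivity
      · rw [inv_le_comm₀ (by linarith) ht₀pos]
        exact hc3
    have hUz := hlow z⁻¹ hzinv
    have hG := hGlow z hc2
    have hJ1 := hJlow z hz0
    have hmul : (z/2) * (c * (z⁻¹) ^ β) = (c/2) * z ^ γ := by
      rw [Real.inv_rpow (by linarith : (0:ℝ) ≤ z), ← Real.rpow_neg (by linarith : (0:ℝ) ≤ z)]
      rw [hγdef]
      rw [show (1:ℝ) - β = 1 + (-β) by ring, Real.rpow_add (by linarith : (0:ℝ) < z),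
        Real.rpow_one]
      ring
    have hmono : (z/2) * (c * (z⁻¹) ^ β) ≤ (z/2) * U z⁻¹ := by
      apply mul_le_mul_of_nonneg_left hUz (by linarith)
    have hlogZ3 : 0 ≤ (Real.log Z)^3 := by
      have : 0 ≤ Real.log Z := Real.log_nonneg (by linarith)
      positivity
    nlinarith [hmul, hmono, hG, hJ1, hc1]
end

section
/- Let a ∈ ℝ and let ν be a Borel measure on (0,∞), absolutely continuous with respect to Lebesgue measure, with ∫_{(0,1)} y² ν(dy) < ∞ and ∫_{[1,∞)} y ν(dy) < ∞. Define U(x) := ∫_{(0,x]} y² ν(dy) for x > 0 and J′(z) := −a + ∫_{(0,1)} y (1 − e^{−zy}) ν(dy) − ∫_{[1,∞)} y e^{−zy} ν(dy) for z > 0. Suppose there exists a function M, positive on some interval (0,δ) and slowly varying at 0, such that U(x) / (x M(x)) → 1 as x → 0⁺, M(x) → 0 as x → 0⁺, and ∫₀¹ M(x)/x dx = +∞. Then for every C > 0, limsup_{z→∞} ( ln z − C J′(z) ) = +∞. -/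
open MeasureTheory Set Filter

private lemma exp_bound_one {z y : ℝ} (hz : 0 < z) (hy : 0 < y) :
    0 ≤ y * (1 - Real.exp (-z * y)) ∧ y * (1 - Real.exp (-z * y)) ≤ y ∧
      y * (1 - Real.exp (-z * y)) ≤ z * y ^ 2 := by
  have h1 : Real.exp (-z * y) ≤ 1 := by
    rw [Real.exp_le_one_iff]; nlinarith
  have h2 : -z * y + 1 ≤ Real.exp (-z * y) := Real.add_one_le_exp (-z * y)
  have h3 : 0 < Real.exp (-z * y) := Real.exp_pos _
  refine ⟨by nlinarith, by nlinarith, by nlinarith⟩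

private lemma integrableOn_id_Ioc (ν : Measure ℝ)
    (hint1 : IntegrableOn (fun y => y ^ 2) (Ioo 0 1) ν)
    {b : ℝ} (a : ℝ) (ha : 0 < a) (hb : b < 1) :
    IntegrableOn (fun y : ℝ => y) (Ioc a b) ν := by
  have hsub : Ioc a b ⊆ Ioo 0 1 := fun y hy => ⟨ha.trans hy.1, lt_of_le_of_lt hy.2 hb⟩
  have h2 : IntegrableOn (fun y => y ^ 2 / a) (Ioc a b) ν := (hint1.mono_set hsub).div_const a
  refine h2.mono' measurable_id.aestronglyMeasurable ?_
  filter_upwards [ae_restrict_mem measurableSet_Ioc] with y hy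
  have h0 : 0 < y := ha.trans hy.1
  rw [Real.norm_eq_abs, abs_of_pos h0, le_div_iff₀ ha]
  nlinarith [hy.1]

private lemma block_sum (ν : Measure ℝ)
    (hint1 : IntegrableOn (fun y => y ^ 2) (Ioo 0 1) ν)
    {ε x₀ : ℝ} (hε : 0 ≤ ε) (hx₀ : 0 < x₀) (hx₀1 : x₀ < 1)
    (hUb : ∀ x, 0 < x → x ≤ x₀ → (∫ y in Ioc 0 x, y ^ 2 ∂ν) ≤ ε * x) :
    ∀ n : ℕ, (∫ y in Ioc (x₀ / 2 ^ n) x₀, y ∂ν) ≤ 2 * ε * n := by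
  intro n
  induction n with
  | zero => simp
  | succ n ih =>
    have h2n : (0:ℝ) < 2 ^ n := by positivity
    have h2n1 : (0:ℝ) < 2 ^ (n + 1) := by positivity
    have hs : (0:ℝ) < x₀ / 2 ^ (n + 1) := by positivity
    have hsn : (0:ℝ) < x₀ / 2 ^ n := by positivity
    have hmid : x₀ / 2 ^ (n + 1) ≤ x₀ / 2 ^ n := by
      apply div_le_div_of_nonneg_left hx₀.le h2n
      exact pow_le_pow_right₀ one_le_two (Nat.le_succ n)
    have hone : (1:ℝ) ≤ 2 ^ n := one_le_pow₀ one_le_two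
    have hx₀n : x₀ / 2 ^ n ≤ x₀ := by
      rw [div_le_iff₀ h2n]; nlinarith
    have hsn1 : x₀ / 2 ^ n < 1 := lt_of_le_of_lt hx₀n hx₀1
    have hsplit : Ioc (x₀ / 2 ^ (n + 1)) x₀
        = Ioc (x₀ / 2 ^ (n + 1)) (x₀ / 2 ^ n) ∪ Ioc (x₀ / 2 ^ n) x₀ :=
      (Set.Ioc_union_Ioc_eq_Ioc hmid hx₀n).symm
    have hdisj : Disjoint (Ioc (x₀ / 2 ^ (n + 1)) (x₀ / 2 ^ n)) (Ioc (x₀ / 2 ^ n) x₀) :=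
      Set.disjoint_left.2 fun y h1 h2 => absurd h1.2 (not_le.2 h2.1)
    have int1 : IntegrableOn (fun y : ℝ => y) (Ioc (x₀ / 2 ^ (n + 1)) (x₀ / 2 ^ n)) ν :=
      integrableOn_id_Ioc ν hint1 _ hs hsn1
    have int2 : IntegrableOn (fun y : ℝ => y) (Ioc (x₀ / 2 ^ n) x₀) ν :=
      integrableOn_id_Ioc ν hint1 _ hsn hx₀1
    rw [hsplit, setIntegral_union hdisj measurableSet_Ioc int1 int2]
    have hsub : Ioc (x₀ / 2 ^ (n + 1)) (x₀ / 2 ^ n) ⊆ Ioo 0 1 :=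
      fun y hy => ⟨hs.trans hy.1, lt_of_le_of_lt hy.2 hsn1⟩
    have hsub2 : Ioc (0:ℝ) (x₀ / 2 ^ n) ⊆ Ioo 0 1 :=
      fun y hy => ⟨hy.1, lt_of_le_of_lt hy.2 hsn1⟩
    have hblock : (∫ y in Ioc (x₀ / 2 ^ (n + 1)) (x₀ / 2 ^ n), y ∂ν) ≤ 2 * ε := by
      have hmono : (∫ y in Ioc (x₀ / 2 ^ (n + 1)) (x₀ / 2 ^ n), y ∂ν)
          ≤ ∫ y in Ioc (x₀ / 2 ^ (n + 1)) (x₀ / 2 ^ n), (2 ^ (n + 1) / x₀) * y ^ 2 ∂ν := by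
        refine setIntegral_mono_on int1 ((hint1.mono_set hsub).const_mul _)
          measurableSet_Ioc fun y hy => ?_
        have hy0 : 0 < y := hs.trans hy.1
        have : x₀ < y * 2 ^ (n + 1) := by
          rw [← div_lt_iff₀ h2n1] at *; linarith [hy.1]
        rw [div_mul_eq_mul_div, le_div_iff₀ hx₀]
        nlinarith
      have hmono2 : (∫ y in Ioc (x₀ / 2 ^ (n + 1)) (x₀ / 2 ^ n), y ^ 2 ∂ν)
          ≤ ∫ y in Ioc 0 (x₀ / 2 ^ n), y ^ 2 ∂ν := by
        refine setIntegral_mono_set (hint1.mono_set hsub2)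
          (Filter.Eventually.of_forall fun y => sq_nonneg y) ?_
        exact Filter.Eventually.of_forall fun y hy => ⟨hs.trans hy.1, hy.2⟩
      calc (∫ y in Ioc (x₀ / 2 ^ (n + 1)) (x₀ / 2 ^ n), y ∂ν)
          ≤ ∫ y in Ioc (x₀ / 2 ^ (n + 1)) (x₀ / 2 ^ n), (2 ^ (n + 1) / x₀) * y ^ 2 ∂ν := hmono
        _ = (2 ^ (n + 1) / x₀) * ∫ y in Ioc (x₀ / 2 ^ (n + 1)) (x₀ / 2 ^ n), y ^ 2 ∂ν :=
            MeasureTheory.integral_const_mul _ _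
        _ ≤ (2 ^ (n + 1) / x₀) * ∫ y in Ioc 0 (x₀ / 2 ^ n), y ^ 2 ∂ν := by
            apply mul_le_mul_of_nonneg_left hmono2 (by positivity)
        _ ≤ (2 ^ (n + 1) / x₀) * (ε * (x₀ / 2 ^ n)) := by
            apply mul_le_mul_of_nonneg_left (hUb _ hsn hx₀n) (by positivity)
        _ = 2 * ε := by field_simp; ring
    push_cast
    linarith


/-- (Tauberian existence criterion, boundary case `ρ = 1`.) If `ν` has
a density, `U(x) = ∫_{(0,x]} y² ν(dy)` behaves like `x M(x)` as `x → 0⁺` with `M`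
slowly varying at `0`, `M(x) → 0` as `x → 0⁺` and `∫₀¹ M(x)/x dx = +∞`, then the
logarithmic growth condition `limsup_{z→∞}(ln z − C J′(z)) = +∞` holds for every
`C > 0`. -/
theorem log_growth_of_tauberian_rho_eq_one
    (a : ℝ) (ν : MeasureTheory.Measure ℝ) (hν : ν (Set.Iic 0) = 0)
    (hac : ν ≪ MeasureTheory.volume)
    (hint1 : MeasureTheory.IntegrableOn (fun y => y ^ 2) (Set.Ioo 0 1) ν)
    (hint2 : MeasureTheory.IntegrableOn (fun y => y) (Set.Ici 1) ν)
    (U : ℝ → ℝ) (hU : ∀ x > (0:ℝ), U x = ∫ y in Set.Ioc 0 x, y ^ 2 ∂ν)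
    (J' : ℝ → ℝ)
    (hJ : ∀ z > (0:ℝ), J' z = -a
      + (∫ y in Set.Ioo 0 1, y * (1 - Real.exp (-z * y)) ∂ν)
      - ∫ y in Set.Ici 1, y * Real.exp (-z * y) ∂ν)
    (M : ℝ → ℝ) (δ : ℝ) (hδ : 0 < δ)
    (hMpos : ∀ x ∈ Set.Ioo (0:ℝ) δ, 0 < M x)
    (hslow : ∀ x > (0:ℝ), Filter.Tendsto (fun t => M (t * x) / M t)
      (nhdsWithin 0 (Set.Ioi 0)) (nhds 1))
    (hUasymp : Filter.Tendsto (fun x => U x / (x * M x))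
      (nhdsWithin 0 (Set.Ioi 0)) (nhds 1))
    (hM0 : Filter.Tendsto M (nhdsWithin 0 (Set.Ioi 0)) (nhds 0))
    (hMdiv : ∫⁻ x in Set.Ioc (0:ℝ) 1, ENNReal.ofReal (M x / x) = ⊤) :
    ∀ C > (0:ℝ), ∀ R : ℝ, ∃ᶠ z in Filter.atTop,
      R ≤ Real.log z - C * J' z := by
  intro C hC R
  set K := ∫ y in Ioo (0:ℝ) 1, y ^ 2 ∂ν with hK_def
  have hKnn : 0 ≤ K := setIntegral_nonneg measurableSet_Ioo fun y _ => sq_nonneg y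
  have hlog2 : 0 < Real.log 2 := Real.log_pos one_lt_two
  set ε := Real.log 2 / (4 * C) with hε_def
  have hε : 0 < ε := by positivity
  -- U x / x → 0
  have hUx_tend : Tendsto (fun x => U x / x) (nhdsWithin 0 (Ioi 0)) (nhds 0) := by
    have h := hUasymp.mul hM0
    rw [mul_zero] at h
    refine Tendsto.congr' ?_ h
    filter_upwards [Ioo_mem_nhdsGT_of_mem ⟨le_refl (0:ℝ), hδ⟩] with x hx
    have hMx : M x ≠ 0 := ne_of_gt (hMpos x hx)
    have hx0 : x ≠ 0 := ne_of_gt hx.1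
    field_simp
  have hev : ∀ᶠ x in nhdsWithin 0 (Ioi 0), U x / x < ε :=
    hUx_tend.eventually_lt_const hε
  obtain ⟨η, hη, hsub⟩ := mem_nhdsGT_iff_exists_Ioo_subset.1 hev
  set x₀ := min (η / 2) (1 / 2) with hx₀_def
  have hηpos : 0 < η := hη
  have hx₀ : 0 < x₀ := lt_min (by linarith) (by norm_num)
  have hx₀1 : x₀ < 1 := lt_of_le_of_lt (min_le_right _ _) (by norm_num)
  have hx₀η : x₀ < η := lt_of_le_of_lt (min_le_left _ _) (by linarith)
  have hUb : ∀ x, 0 < x → x ≤ x₀ → (∫ y in Ioc 0 x, y ^ 2 ∂ν) ≤ ε * x := by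
    intro x hx hxx
    have hmem : x ∈ Ioo 0 η := ⟨hx, lt_of_le_of_lt hxx hx₀η⟩
    have h1 : U x / x < ε := hsub hmem
    rw [← hU x hx]
    have := (div_le_iff₀ hx).1 h1.le
    linarith
  have hblocks := block_sum ν hint1 hε.le hx₀ hx₀1 hUb
  set B := -a + 3 * ε + K / x₀ with hB_def
  apply Filter.Eventually.frequently
  filter_upwards [eventually_ge_atTop (max (max 1 (1 / x₀)) (Real.exp (2 * (R + C * B))))]
    with z hz
  have hz1 : 1 ≤ z := le_trans (le_trans (le_max_left _ _) (le_max_left _ _)) hz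
  have hzpos : 0 < z := lt_of_lt_of_le one_pos hz1
  have hzx₀' : 1 / x₀ ≤ z := le_trans (le_trans (le_max_right _ _) (le_max_left _ _)) hz
  have hzx : 1 ≤ z * x₀ := (div_le_iff₀ hx₀).1 hzx₀'
  set n := ⌈Real.logb 2 (z * x₀)⌉₊ with hn_def
  have h2n : z * x₀ ≤ 2 ^ n := by
    calc z * x₀ = 2 ^ Real.logb 2 (z * x₀) :=
          (Real.rpow_logb two_pos (by norm_num) (by positivity)).symm
      _ ≤ (2:ℝ) ^ (n : ℝ) :=
          Real.rpow_le_rpow_of_exponent_le one_le_two (Nat.le_ceil _)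
      _ = 2 ^ n := Real.rpow_natCast 2 n
  have hnle : (n : ℝ) ≤ Real.log z / Real.log 2 + 1 := by
    have h0 : 0 ≤ Real.logb 2 (z * x₀) := Real.logb_nonneg one_lt_two hzx
    have h1 : (n : ℝ) < Real.logb 2 (z * x₀) + 1 := Nat.ceil_lt_add_one h0
    have h2 : Real.logb 2 (z * x₀) ≤ Real.log z / Real.log 2 := by
      rw [Real.logb, Real.log_mul (ne_of_gt hzpos) (ne_of_gt hx₀)]
      have hlx : Real.log x₀ ≤ 0 := Real.log_nonpos hx₀.le hx₀1.le
      rw [div_le_div_iff_of_pos_right hlog2]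
      linarith
    linarith
  set s := x₀ / 2 ^ n with hs_def
  have h2npos : (0:ℝ) < 2 ^ n := by positivity
  have hspos : 0 < s := by positivity
  have hone2n : (1:ℝ) ≤ 2 ^ n := one_le_pow₀ one_le_two
  have hsx₀ : s ≤ x₀ := by
    rw [hs_def, div_le_iff₀ h2npos]; nlinarith
  have hs1 : s < 1 := lt_of_le_of_lt hsx₀ hx₀1
  have hzs : z * s ≤ 1 := by
    rw [hs_def, ← mul_div_assoc, div_le_one h2npos]; exact h2n
  -- integrability of the integrand
  have hfc : Continuous fun y : ℝ => y * (1 - Real.exp (-z * y)) := by fun_prop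
  have hfint : IntegrableOn (fun y => y * (1 - Real.exp (-z * y))) (Ioo 0 1) ν := by
    refine (hint1.const_mul z).mono' hfc.aestronglyMeasurable ?_
    filter_upwards [ae_restrict_mem measurableSet_Ioo] with y hy
    obtain ⟨h0, _, h2e⟩ := exp_bound_one hzpos hy.1
    rw [Real.norm_eq_abs, abs_of_nonneg h0]; exact h2e
  -- three pieces
  have hsubA : Ioc 0 s ⊆ Ioo (0:ℝ) 1 := fun y hy => ⟨hy.1, lt_of_le_of_lt hy.2 hs1⟩
  have hsubB : Ioc s x₀ ⊆ Ioo (0:ℝ) 1 :=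
    fun y hy => ⟨hspos.trans hy.1, lt_of_le_of_lt hy.2 hx₀1⟩
  have hsubC : Ioo x₀ 1 ⊆ Ioo (0:ℝ) 1 := fun y hy => ⟨hx₀.trans hy.1, hy.2⟩
  have hsubAB : Ioc 0 x₀ ⊆ Ioo (0:ℝ) 1 := fun y hy => ⟨hy.1, lt_of_le_of_lt hy.2 hx₀1⟩
  have hA : (∫ y in Ioc 0 s, y * (1 - Real.exp (-z * y)) ∂ν) ≤ ε := by
    have h1 : (∫ y in Ioc 0 s, y * (1 - Real.exp (-z * y)) ∂ν)
        ≤ ∫ y in Ioc 0 s, z * y ^ 2 ∂ν :=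
      setIntegral_mono_on (hfint.mono_set hsubA) ((hint1.mono_set hsubA).const_mul z)
        measurableSet_Ioc fun y hy => (exp_bound_one hzpos hy.1).2.2
    calc (∫ y in Ioc 0 s, y * (1 - Real.exp (-z * y)) ∂ν)
        ≤ ∫ y in Ioc 0 s, z * y ^ 2 ∂ν := h1
      _ = z * ∫ y in Ioc 0 s, y ^ 2 ∂ν := MeasureTheory.integral_const_mul _ _
      _ ≤ z * (ε * s) := mul_le_mul_of_nonneg_left (hUb s hspos hsx₀) hzpos.le
      _ = ε * (z * s) := by ring
      _ ≤ ε * 1 := mul_le_mul_of_nonneg_left hzs hε.le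
      _ = ε := mul_one ε
  have hBn : (∫ y in Ioc s x₀, y * (1 - Real.exp (-z * y)) ∂ν) ≤ 2 * ε * n := by
    have h1 : (∫ y in Ioc s x₀, y * (1 - Real.exp (-z * y)) ∂ν)
        ≤ ∫ y in Ioc s x₀, y ∂ν :=
      setIntegral_mono_on (hfint.mono_set hsubB)
        (integrableOn_id_Ioc ν hint1 _ hspos hx₀1) measurableSet_Ioc
        fun y hy => (exp_bound_one hzpos (hspos.trans hy.1)).2.1
    exact h1.trans (hblocks n)
  have hCp : (∫ y in Ioo x₀ 1, y * (1 - Real.exp (-z * y)) ∂ν) ≤ K / x₀ := by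
    have h1 : (∫ y in Ioo x₀ 1, y * (1 - Real.exp (-z * y)) ∂ν)
        ≤ ∫ y in Ioo x₀ 1, y ^ 2 / x₀ ∂ν := by
      refine setIntegral_mono_on (hfint.mono_set hsubC)
        ((hint1.mono_set hsubC).div_const x₀) measurableSet_Ioo fun y hy => ?_
      have hy0 : 0 < y := hx₀.trans hy.1
      have h2 : y ≤ y ^ 2 / x₀ := by rw [le_div_iff₀ hx₀]; nlinarith [hy.1]
      exact le_trans (exp_bound_one hzpos hy0).2.1 h2
    have h2 : (∫ y in Ioo x₀ 1, y ^ 2 ∂ν) ≤ K := by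
      refine setIntegral_mono_set hint1
        (Filter.Eventually.of_forall fun y => sq_nonneg y)
        (Filter.Eventually.of_forall fun y hy => hsubC hy)
    calc (∫ y in Ioo x₀ 1, y * (1 - Real.exp (-z * y)) ∂ν)
        ≤ ∫ y in Ioo x₀ 1, y ^ 2 / x₀ ∂ν := h1
      _ = (∫ y in Ioo x₀ 1, y ^ 2 ∂ν) / x₀ := MeasureTheory.integral_div _ _
      _ ≤ K / x₀ := by rw [div_le_div_iff_of_pos_right hx₀]; exact h2
  -- split the integral over (0,1)
  have hdisj1 : Disjoint (Ioc (0:ℝ) x₀) (Ioo x₀ 1) :=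
    Set.disjoint_left.2 fun y h1 h2 => absurd h1.2 (not_le.2 h2.1)
  have hdisj2 : Disjoint (Ioc (0:ℝ) s) (Ioc s x₀) :=
    Set.disjoint_left.2 fun y h1 h2 => absurd h1.2 (not_le.2 h2.1)
  have hEq : (∫ y in Ioo (0:ℝ) 1, y * (1 - Real.exp (-z * y)) ∂ν)
      = (∫ y in Ioc 0 s, y * (1 - Real.exp (-z * y)) ∂ν)
        + (∫ y in Ioc s x₀, y * (1 - Real.exp (-z * y)) ∂ν)
        + (∫ y in Ioo x₀ 1, y * (1 - Real.exp (-z * y)) ∂ν) := by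
    rw [← Set.Ioc_union_Ioo_eq_Ioo hx₀.le hx₀1,
      setIntegral_union hdisj1 measurableSet_Ioo (hfint.mono_set hsubAB)
        (hfint.mono_set hsubC),
      ← Set.Ioc_union_Ioc_eq_Ioc hspos.le hsx₀,
      setIntegral_union hdisj2 measurableSet_Ioc (hfint.mono_set hsubA)
        (hfint.mono_set hsubB)]
  have hI2 : 0 ≤ ∫ y in Ici (1:ℝ), y * Real.exp (-z * y) ∂ν :=
    setIntegral_nonneg measurableSet_Ici fun y hy =>
      mul_nonneg (le_trans zero_le_one hy) (Real.exp_pos _).le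
  have hJz : J' z ≤ -a + (ε + 2 * ε * n + K / x₀) := by
    rw [hJ z hzpos, hEq]; linarith
  -- arithmetic conclusion
  have h1 : C * J' z ≤ C * (-a + ε + K / x₀) + C * (2 * ε * (n : ℝ)) := by
    have h := mul_le_mul_of_nonneg_left hJz hC.le
    have hr : C * (-a + (ε + 2 * ε * (n : ℝ) + K / x₀))
        = C * (-a + ε + K / x₀) + C * (2 * ε * (n : ℝ)) := by ring
    linarith [hr ▸ h]
  have hn2 : 2 * ε * (n : ℝ) ≤ Real.log z / (2 * C) + 2 * ε := by
    have hmul : 2 * ε * (n : ℝ) ≤ 2 * ε * (Real.log z / Real.log 2 + 1) :=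
      mul_le_mul_of_nonneg_left hnle (by positivity)
    have heq : 2 * ε * (Real.log z / Real.log 2 + 1)
        = Real.log z / (2 * C) + 2 * ε := by
      rw [hε_def]; field_simp; ring
    linarith [heq ▸ hmul]
  have h2 : C * (2 * ε * (n : ℝ)) ≤ C * (Real.log z / (2 * C) + 2 * ε) :=
    mul_le_mul_of_nonneg_left hn2 hC.le
  have h3 : C * (Real.log z / (2 * C) + 2 * ε)
      = Real.log z / 2 + 2 * ε * C := by field_simp
  have hzB : 2 * (R + C * B) ≤ Real.log z := by
    have hz2 : Real.exp (2 * (R + C * B)) ≤ z := le_trans (le_max_right _ _) hz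
    exact (Real.le_log_iff_exp_le hzpos).2 hz2
  have hCB : C * B = C * (-a + ε + K / x₀) + 2 * ε * C := by rw [hB_def]; ring
  clear_value K ε x₀ s n B
  linarith [h1, h2, h3, hzB, hCB]
end
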